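/- arXiv:1804.04730 — 5 statements merged into one kernel-verified Lean document; each statement's English description precedes it below -/
import Mathlib

section
/- Let Q be a finite type, let c ≥ 0 be a real number, and let ρ and σ be positive semidefinite matrices over ℂ indexed by Q. Then ρ ≤ c·σ if and only if the following holds: for every pair of finite types R₁ and R₂, every purification σ̂ : R₁ × Q → ℂ of σ and every purification ρ̂ : R₂ × Q → ℂ of ρ, there exists a matrix A : Matrix R₂ R₁ ℂ with A†A ≤ 1 such that ρ̂ = √c · (A ⊗ 1_Q) σ̂, where (A ⊗ 1_Q) acts on vectors by ((A ⊗ 1_Q)v)(r₂,q) = ∑_{r₁} A(r₂,r₁)·v(r₁,q). -/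
open Matrix ComplexOrder

/-- Partial trace over the first factor of a matrix indexed by `R × Q`. -/
noncomputable def ptrFst {R Q : Type} [Fintype R]
    (M : Matrix (R × Q) (R × Q) ℂ) : Matrix Q Q ℂ :=
  Matrix.of fun q q' => ∑ r, M (r, q) (r, q')

/-- If `-(A * Aᴴ)` is PSD then `A = 0`. -/
lemma eq_zero_of_neg_self_mul_conjTranspose_posSemidef {m n : Type} [Fintype m] [Fintype n]
    {A : Matrix m n ℂ} (h : (-(A * Aᴴ)).PosSemidef) : A = 0 := by
  classical
  ext i j
  have hv := h.dotProduct_mulVec_nonneg (Pi.single i 1)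
  set w : n → ℂ := Aᴴ *ᵥ Pi.single i 1 with hw
  have hq : star (Pi.single i 1) ⬝ᵥ (A * Aᴴ) *ᵥ (Pi.single i 1) = ∑ k, star (w k) * w k := by
    rw [← Matrix.mulVec_mulVec, Matrix.dotProduct_mulVec]
    have hst : star (Pi.single i 1 : m → ℂ) ᵥ* A = star w := by
      rw [hw, Matrix.star_mulVec, Matrix.conjTranspose_conjTranspose]
    rw [hst]
    rfl
  rw [Matrix.neg_mulVec, dotProduct_neg, hq] at hv
  have h1 : (0:ℂ) ≤ ∑ k, star (w k) * w k :=
    Finset.sum_nonneg fun k _ => star_mul_self_nonneg _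
  have hsum : ∑ k, star (w k) * w k = 0 := le_antisymm (neg_nonneg.mp hv) h1
  have hk : ∀ k ∈ Finset.univ, star (w k) * w k = 0 := by
    rw [← Finset.sum_eq_zero_iff_of_nonneg fun k _ => star_mul_self_nonneg (w k)]
    exact hsum
  have hwj : w j = 0 := by
    rcases mul_eq_zero.mp (hk j (Finset.mem_univ j)) with h' | h'
    · simpa using congrArg star h'
    · exact h'
  have hj : w j = star (A i j) := by
    simp [hw, Matrix.mulVec_single, Matrix.conjTranspose_apply]
  rw [hj] at hwj
  simpa using congrArg star hwj

lemma conjTranspose_transpose' {m n : Type} (K : Matrix m n ℂ) : (Kᵀ)ᴴ = (Kᴴ)ᵀ := by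
  ext i j
  simp [Matrix.conjTranspose_apply]

/-- Douglas' lemma / majorization-factorization, finite-dimensional complex case. -/
lemma douglas {Q R S : Type} [Fintype Q] [Fintype R] [Fintype S] [DecidableEq R]
    (N : Matrix Q R ℂ) (M : Matrix Q S ℂ)
    (h : (N * Nᴴ - M * Mᴴ).PosSemidef) :
    ∃ K : Matrix R S ℂ,
      ((1 : Matrix R R ℂ) - K * Kᴴ).PosSemidef ∧ M = N * K := by
  letI : DecidableEq Q := Classical.decEq Q
  letI : DecidableEq S := Classical.decEq S
  have hD : (Nᴴ * N).PosSemidef := Matrix.posSemidef_conjTranspose_mul_self N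
  set D : Matrix R R ℂ := Nᴴ * N with hDdef
  have hDh : D.IsHermitian := hD.1
  set U : Matrix R R ℂ := (hDh.eigenvectorUnitary : Matrix R R ℂ) with hUdef
  have hU1 : U * Uᴴ = 1 := by
    simpa [Matrix.star_eq_conjTranspose] using
      Unitary.mul_star_self_of_mem hDh.eigenvectorUnitary.2
  have hU2 : Uᴴ * U = 1 := by
    simpa [Matrix.star_eq_conjTranspose] using
      Unitary.star_mul_self_of_mem hDh.eigenvectorUnitary.2
  set e : R → ℝ := hDh.eigenvalues with hedef
  set f : (R → ℂ) → Matrix R R ℂ := fun a => U * Matrix.diagonal a * Uᴴ with hfdef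
  have hmul : ∀ a b, f a * f b = f (a * b) := by
    intro a b
    simp only [hfdef, Matrix.mul_assoc]
    rw [← Matrix.mul_assoc Uᴴ U, hU2, Matrix.one_mul,
      ← Matrix.mul_assoc (Matrix.diagonal a), Matrix.diagonal_mul_diagonal]
    rfl
  have hct : ∀ a, (f a)ᴴ = f (star a) := by
    intro a
    simp [hfdef, Matrix.conjTranspose_mul, Matrix.diagonal_conjTranspose, Matrix.mul_assoc]
  have hf0 : f 0 = 0 := by
    simp only [hfdef]
    rw [show (0 : R → ℂ) = (fun _ => (0:ℂ)) from rfl, Matrix.diagonal_zero,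
      Matrix.mul_zero, Matrix.zero_mul]
  have hf1 : f 1 = 1 := by
    simp only [hfdef]
    rw [show (1 : R → ℂ) = (fun _ => (1:ℂ)) from rfl, Matrix.diagonal_one,
      Matrix.mul_one, hU1]
  have hfsub : ∀ a b, f a - f b = f (a - b) := by
    intro a b
    simp only [hfdef]
    rw [← Matrix.sub_mul, ← Matrix.mul_sub, Matrix.diagonal_sub]
    rfl
  have hDU : D = f (fun i => (e i : ℂ)) := by
    simpa [hfdef, Matrix.star_eq_conjTranspose, Function.comp_def] using hDh.spectral_theorem
  set d : R → ℂ := fun i => if e i = 0 then 0 else ((e i)⁻¹ : ℝ) with hddef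
  set p : R → ℂ := fun i => if e i = 0 then 0 else 1 with hpdef
  have hstar_d : star d = d := by
    funext i
    by_cases hi : e i = 0 <;> simp [hddef, hi]
  have hstar_p : star p = p := by
    funext i
    by_cases hi : e i = 0 <;> simp [hpdef, hi]
  have hde : d * (fun i => (e i : ℂ)) = p := by
    funext i
    by_cases hi : e i = 0
    · simp [hddef, hpdef, hi]
    · have h' : ((e i)⁻¹ : ℂ) * (e i : ℂ) = 1 := by
        rw [inv_mul_cancel₀]
        exact_mod_cast hi
      simp only [hddef, hpdef, Pi.mul_apply, if_neg hi, Complex.ofReal_inv]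
      exact h'
  have hed : (fun i => (e i : ℂ)) * d = p := by
    funext i
    have := congrFun hde i
    simpa [mul_comm] using this
  set g : Matrix R R ℂ := f d with hgdef
  set P : Matrix R R ℂ := f p with hPdef
  have hgD : g * D = P := by rw [hgdef, hDU, hmul, hde]
  have hDg : D * g = P := by rw [hgdef, hDU, hmul, hed]
  have hgct : gᴴ = g := by rw [hgdef, hct, hstar_d]
  have hPct : Pᴴ = P := by rw [hPdef, hct, hstar_p]
  have hPP : P * P = P := by
    have hpp : p * p = p := by
      funext i
      by_cases hi : e i = 0 <;> simp [hpdef, hi]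
    rw [hPdef, hmul, hpp]
  -- N * P = N
  have hNP : N * P = N := by
    have key : (N * (1 - P))ᴴ * (N * (1 - P)) = 0 := by
      have h1 : (N * (1 - P))ᴴ * (N * (1 - P)) = (1 - P)ᴴ * (D * (1 - P)) := by
        rw [Matrix.conjTranspose_mul, hDdef, Matrix.mul_assoc, Matrix.mul_assoc]
      rw [h1, Matrix.conjTranspose_sub, Matrix.conjTranspose_one, hPct]
      have h2 : (1 : Matrix R R ℂ) - P = f (1 - p) := by rw [← hfsub, hf1, hPdef]
      rw [h2, hDU, hmul, hmul]
      have h3 : ((1 : R → ℂ) - p) * ((fun i => (e i : ℂ)) * (1 - p)) = 0 := by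
        funext i
        by_cases hi : e i = 0 <;> simp [hpdef, hi]
      rw [h3, hf0]
    have h4 := Matrix.conjTranspose_mul_self_eq_zero.mp key
    rw [Matrix.mul_sub, Matrix.mul_one] at h4
    exact (sub_eq_zero.mp h4).symm
  clear_value g P
  -- the projection N * g * N^H fixes N and M
  have hPiN : N * g * Nᴴ * N = N := by
    rw [Matrix.mul_assoc (N * g), ← hDdef, Matrix.mul_assoc N g D, hgD, hNP]
  obtain ⟨Z, hZdef⟩ : ∃ Z : Matrix Q Q ℂ, Z = 1 - N * g * Nᴴ := ⟨_, rfl⟩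
  have hZct : Zᴴ = Z := by
    rw [hZdef, Matrix.conjTranspose_sub, Matrix.conjTranspose_one]
    simp only [Matrix.conjTranspose_mul, Matrix.conjTranspose_conjTranspose, hgct,
      Matrix.mul_assoc]
  have hZN : Z * N = 0 := by
    rw [hZdef, Matrix.sub_mul, Matrix.one_mul, hPiN, sub_self]
  have hZM : Z * M = 0 := by
    have hpsd : (Z * (N * Nᴴ - M * Mᴴ) * Zᴴ).PosSemidef := h.mul_mul_conjTranspose_same Z
    have hE : Z * (N * Nᴴ - M * Mᴴ) * Zᴴ = -((Z * M) * (Z * M)ᴴ) := by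
      rw [hZct, Matrix.mul_sub, Matrix.sub_mul]
      have e1 : Z * (N * Nᴴ) * Z = 0 := by
        rw [← Matrix.mul_assoc, hZN, Matrix.zero_mul, Matrix.zero_mul]
      have e2 : Z * (M * Mᴴ) * Z = (Z * M) * (Z * M)ᴴ := by
        rw [Matrix.conjTranspose_mul, hZct, ← Matrix.mul_assoc, Matrix.mul_assoc (Z * M)]
      rw [e1, e2, zero_sub]
    rw [hE] at hpsd
    exact eq_zero_of_neg_self_mul_conjTranspose_posSemidef hpsd
  refine ⟨g * Nᴴ * M, ?_, ?_⟩
  · -- contraction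
    have hKct : (g * Nᴴ * M)ᴴ = Mᴴ * (N * g) := by
      rw [Matrix.conjTranspose_mul, Matrix.conjTranspose_mul, hgct,
        Matrix.conjTranspose_conjTranspose]
    obtain ⟨W, hWdef⟩ : ∃ W : Matrix Q R ℂ, W = N * g := ⟨_, rfl⟩
    have hWct : Wᴴ = g * Nᴴ := by rw [hWdef, Matrix.conjTranspose_mul, hgct]
    have hpsd : (Wᴴ * (N * Nᴴ - M * Mᴴ) * W).PosSemidef := h.conjTranspose_mul_mul_same W
    have hWN : Wᴴ * (N * Nᴴ) * W = P := by
      rw [hWct, hWdef]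
      simp only [Matrix.mul_assoc]
      rw [← Matrix.mul_assoc Nᴴ N, ← Matrix.mul_assoc Nᴴ N, ← hDdef, hDg,
        ← Matrix.mul_assoc g D, hgD, hPP]
    have hE2 : Wᴴ * (N * Nᴴ - M * Mᴴ) * W = P - (g * Nᴴ * M) * (g * Nᴴ * M)ᴴ := by
      rw [Matrix.mul_sub, Matrix.sub_mul, hWN]
      congr 1
      rw [hKct, hWct, hWdef]
      simp only [Matrix.mul_assoc]
    have hone : (1 : Matrix R R ℂ) - (g * Nᴴ * M) * (g * Nᴴ * M)ᴴ =
        ((1 : Matrix R R ℂ) - P) + (P - (g * Nᴴ * M) * (g * Nᴴ * M)ᴴ) := by abel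
    rw [hone]
    apply Matrix.PosSemidef.add
    · have h2 : (1 : Matrix R R ℂ) - P = f (1 - p) := by rw [← hfsub, hf1, hPdef]
      rw [h2, hfdef]
      refine Matrix.PosSemidef.mul_mul_conjTranspose_same ?_ U
      refine Matrix.posSemidef_diagonal_iff.mpr fun i => ?_
      by_cases hi : e i = 0 <;> simp [hpdef, hi]
    · rw [← hE2]
      exact hpsd
  · -- M = N * K
    have h7 := hZM
    rw [hZdef, Matrix.sub_mul, Matrix.one_mul, sub_eq_zero] at h7
    conv_lhs => rw [h7]
    simp only [Matrix.mul_assoc]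

/-- `ρ ≤ c·σ` iff every purification of `ρ` is obtained from every
purification of `σ` by `√c` times a contraction acting on the purifying register. -/
theorem stmt0 {Q : Type} [Fintype Q] (c : ℝ) (hc : 0 ≤ c)
    (ρ σ : Matrix Q Q ℂ) (hρ : ρ.PosSemidef) (hσ : σ.PosSemidef) :
    ((c : ℂ) • σ - ρ).PosSemidef ↔
      ∀ (R₁ R₂ : Type) [Fintype R₁] [Fintype R₂] [DecidableEq R₁]
        (σp : R₁ × Q → ℂ) (ρp : R₂ × Q → ℂ),
        ptrFst (Matrix.vecMulVec σp (star σp)) = σ →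
        ptrFst (Matrix.vecMulVec ρp (star ρp)) = ρ →
        ∃ A : Matrix R₂ R₁ ℂ,
          ((1 : Matrix R₁ R₁ ℂ) - Aᴴ * A).PosSemidef ∧
          ∀ r₂ q, ρp (r₂, q) = (Real.sqrt c : ℂ) * ∑ r₁, A r₂ r₁ * σp (r₁, q) := by
  have hcc : (Real.sqrt c : ℂ) * (Real.sqrt c : ℂ) = (c : ℂ) := by
    rw [← Complex.ofReal_mul, Real.mul_self_sqrt hc]
  have hstarc : star (Real.sqrt c : ℂ) = (Real.sqrt c : ℂ) := by
    rw [Complex.star_def, Complex.conj_ofReal]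
  constructor
  · intro hle R₁ R₂ _ _ _ σp ρp hσp hρp
    set S : Matrix Q R₁ ℂ := Matrix.of fun q r => σp (r, q) with hSdef
    set T : Matrix Q R₂ ℂ := Matrix.of fun q r => ρp (r, q) with hTdef
    have hσS : σ = S * Sᴴ := by
      rw [← hσp]
      ext q q'
      simp [ptrFst, Matrix.vecMulVec_apply, Matrix.mul_apply, hSdef,
        Matrix.conjTranspose_apply]
    have hρT : ρ = T * Tᴴ := by
      rw [← hρp]
      ext q q'
      simp [ptrFst, Matrix.vecMulVec_apply, Matrix.mul_apply, hTdef,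
        Matrix.conjTranspose_apply]
    set N : Matrix Q R₁ ℂ := (Real.sqrt c : ℂ) • S with hNdef
    have hNN : N * Nᴴ = (c : ℂ) • (S * Sᴴ) := by
      rw [hNdef, Matrix.conjTranspose_smul, hstarc, Matrix.smul_mul, Matrix.mul_smul,
        smul_smul, hcc]
    have h' : (N * Nᴴ - T * Tᴴ).PosSemidef := by
      rw [hNN, ← hσS, ← hρT]
      exact hle
    obtain ⟨K, hK1, hK2⟩ := douglas N T h'
    refine ⟨Kᵀ, ?_, ?_⟩
    · have : (Kᵀ)ᴴ * Kᵀ = (K * Kᴴ)ᵀ := by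
        rw [Matrix.transpose_mul, conjTranspose_transpose']
      rw [this, show (1 : Matrix R₁ R₁ ℂ) - (K * Kᴴ)ᵀ = ((1 : Matrix R₁ R₁ ℂ) - K * Kᴴ)ᵀ by
        rw [Matrix.transpose_sub, Matrix.transpose_one]]
      exact hK1.transpose
    · intro r₂ q
      have hTq : T q r₂ = ∑ r₁, N q r₁ * K r₁ r₂ := by
        rw [hK2]; rfl
      have hlhs : ρp (r₂, q) = T q r₂ := rfl
      rw [hlhs, hTq, Finset.mul_sum]
      refine Finset.sum_congr rfl fun r₁ _ => ?_
      simp [hNdef, hSdef, Matrix.transpose_apply]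
      ring
  · intro H
    letI : DecidableEq Q := Classical.decEq Q
    open scoped MatrixOrder in
    obtain ⟨sσ, hsσh, hsσm⟩ : ∃ s : Matrix Q Q ℂ, sᴴ = s ∧ s * s = σ :=
      ⟨CFC.sqrt σ, (CFC.sqrt_nonneg σ).posSemidef.1, CFC.sqrt_mul_sqrt_self σ hσ.nonneg⟩
    open scoped MatrixOrder in
    obtain ⟨sρ, hsρh, hsρm⟩ : ∃ s : Matrix Q Q ℂ, sᴴ = s ∧ s * s = ρ :=
      ⟨CFC.sqrt ρ, (CFC.sqrt_nonneg ρ).posSemidef.1, CFC.sqrt_mul_sqrt_self ρ hρ.nonneg⟩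
    have hσpur : ptrFst (Matrix.vecMulVec (fun rq : Q × Q => sσ rq.2 rq.1)
        (star fun rq : Q × Q => sσ rq.2 rq.1)) = σ := by
      ext q q'
      have : ∑ r, sσ q r * star (sσ q' r) = (sσ * sσᴴ) q q' := by
        simp [Matrix.mul_apply, Matrix.conjTranspose_apply]
      simp only [ptrFst, Matrix.of_apply, Matrix.vecMulVec_apply, Pi.star_apply]
      rw [this, hsσh, hsσm]
    have hρpur : ptrFst (Matrix.vecMulVec (fun rq : Q × Q => sρ rq.2 rq.1)
        (star fun rq : Q × Q => sρ rq.2 rq.1)) = ρ := by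
      ext q q'
      have : ∑ r, sρ q r * star (sρ q' r) = (sρ * sρᴴ) q q' := by
        simp [Matrix.mul_apply, Matrix.conjTranspose_apply]
      simp only [ptrFst, Matrix.of_apply, Matrix.vecMulVec_apply, Pi.star_apply]
      rw [this, hsρh, hsρm]
    obtain ⟨A, hA1, hA2⟩ := H Q Q _ _ hσpur hρpur
    set B : Matrix Q Q ℂ := (Real.sqrt c : ℂ) • sσ with hBdef
    have hBct : Bᴴ = B := by rw [hBdef, Matrix.conjTranspose_smul, hstarc, hsσh]
    have hρB : sρ = B * Aᵀ := by
      ext q r₂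
      rw [hA2 r₂ q]
      simp only [Matrix.mul_apply, hBdef, Matrix.smul_apply, Matrix.transpose_apply,
        smul_eq_mul, Finset.mul_sum]
      refine Finset.sum_congr rfl fun r₁ _ => ?_
      ring
    clear_value B
    have key : (c : ℂ) • σ - ρ = Bᴴ * ((1 : Matrix Q Q ℂ) - Aᴴ * A)ᵀ * B := by
      have hρeq : ρ = B * Aᵀ * (B * Aᵀ)ᴴ := by
        rw [← hρB, hsρh, hsρm]
      have hσeq : (c : ℂ) • σ = Bᴴ * B := by
        rw [hBct, hBdef, Matrix.smul_mul, Matrix.mul_smul, smul_smul, hcc, hsσm]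
      rw [Matrix.transpose_sub, Matrix.transpose_one, Matrix.mul_sub, Matrix.sub_mul,
        Matrix.mul_one, ← hσeq]
      congr 1
      rw [hρeq]
      simp only [Matrix.conjTranspose_mul, Matrix.transpose_mul, hBct,
        conjTranspose_transpose', Matrix.mul_assoc]
    rw [key]
    exact Matrix.PosSemidef.conjTranspose_mul_mul_same hA1.transpose B
end

section
/- Let ν, θ : Fin d → ℂ be unit vectors, let n ≥ 1, let r be a natural number with r ≤ n, and set p = 1 − |⟨ν,θ⟩|². Then the trace Tr(P^{r,ν} · Θ), where Θ = θ^{⊗n}(θ^{⊗n})† is the rank-one matrix of the tensor power of θ, equals the binomial tail ∑_{j=0}^{r} C(n,j) · p^j · (1−p)^{n−j} (in particular it is a real number). -/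
open Matrix ComplexOrder

/-- Rank-one matrix `v v†`. -/
noncomputable def outer {ι : Type} (v : ι → ℂ) : Matrix ι ι ℂ :=
  Matrix.vecMulVec v (star v)

/-- Tensor power of a single-subsystem vector. -/
noncomputable def tensorPow {ι : Type} (n : ℕ) (v : ι → ℂ) : (Fin n → ι) → ℂ :=
  fun x => ∏ i, v (x i)

/-- Hamming-ball projector of radius `r` around `ν^{⊗n}`. -/
noncomputable def hammProj {ι : Type} [Fintype ι] [DecidableEq ι] (n r : ℕ) (ν : ι → ℂ) :
    Matrix (Fin n → ι) (Fin n → ι) ℂ :=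
  ∑ E ∈ Finset.univ.filter (fun E : Finset (Fin n) => E.card ≤ r),
    Matrix.of fun x y =>
      ∏ i, (if i ∈ E then (1 - outer ν) else outer ν) (x i) (y i)

/-- the overlap of a Hamming ball projector with an i.i.d. pure state
is the binomial tail with parameter `p = 1 − |⟨ν,θ⟩|²`. -/
theorem stmt2 {d : ℕ} (ν θ : Fin d → ℂ)
    (hν : ∑ i, Complex.normSq (ν i) = 1) (hθ : ∑ i, Complex.normSq (θ i) = 1)
    (n : ℕ) (hn : 1 ≤ n) (r : ℕ) (hr : r ≤ n) :
    Matrix.trace (hammProj n r ν * outer (tensorPow n θ)) =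
      ((∑ j ∈ Finset.range (r + 1),
          (n.choose j : ℝ) *
            (1 - ‖∑ i, (starRingEnd ℂ) (ν i) * θ i‖ ^ 2) ^ j *
            (‖∑ i, (starRingEnd ℂ) (ν i) * θ i‖ ^ 2) ^ (n - j) : ℝ) : ℂ) := by
  classical
  set s : ℂ := ∑ i, (starRingEnd ℂ) (ν i) * θ i with hs
  set q : ℂ := (starRingEnd ℂ) s * s with hq
  -- per-site sums
  have key_out : ∑ a, ∑ b, outer ν a b * (θ b * (starRingEnd ℂ) (θ a)) = q := by
    have : ∀ a b : Fin d, outer ν a b * (θ b * (starRingEnd ℂ) (θ a))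
        = (ν a * (starRingEnd ℂ) (θ a)) * ((starRingEnd ℂ) (ν b) * θ b) := by
      intro a b
      simp [outer, Matrix.vecMulVec_apply, Pi.star_apply, RCLike.star_def]
      ring
    simp only [this, ← Finset.sum_mul_sum]
    rw [hq, hs]
    rw [map_sum]
    simp only [_root_.map_mul, RingHom.id_apply, Complex.conj_conj]
  have key_in : ∑ a, ∑ b, (1 - outer ν) a b * (θ b * (starRingEnd ℂ) (θ a)) = 1 - q := by
    have expand : ∀ a b : Fin d, (1 - outer ν) a b * (θ b * (starRingEnd ℂ) (θ a))
        = (1 : Matrix (Fin d) (Fin d) ℂ) a b * (θ b * (starRingEnd ℂ) (θ a))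
          - outer ν a b * (θ b * (starRingEnd ℂ) (θ a)) := by
      intro a b; simp [Matrix.sub_apply, sub_mul]
    simp only [expand, Finset.sum_sub_distrib, key_out]
    congr 1
    have : ∀ a : Fin d, ∑ b, (1 : Matrix (Fin d) (Fin d) ℂ) a b * (θ b * (starRingEnd ℂ) (θ a))
        = (Complex.normSq (θ a) : ℂ) := by
      intro a
      simp [Matrix.one_apply, Finset.sum_ite_eq, Complex.normSq_eq_conj_mul_self]
      ring
    rw [Finset.sum_congr rfl (fun a _ => this a), ← Complex.ofReal_sum, hθ, Complex.ofReal_one]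
  -- trace expansion
  have lhs_eq : Matrix.trace (hammProj n r ν * outer (tensorPow n θ))
      = ∑ E ∈ Finset.univ.filter (fun E : Finset (Fin n) => E.card ≤ r),
          (1 - q) ^ E.card * q ^ (n - E.card) := by
    rw [Matrix.trace]
    simp only [Matrix.diag_apply, Matrix.mul_apply, hammProj, Matrix.sum_apply,
      Finset.sum_mul, Matrix.of_apply]
    rw [Finset.sum_comm]
    refine Finset.sum_congr rfl fun E hE => ?_
    have hterm : ∀ x y : Fin n → Fin d,
        (∏ i, (if i ∈ E then (1 - outer ν) else outer ν) (x i) (y i)) *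
          outer (tensorPow n θ) y x
        = ∏ i, ((if i ∈ E then (1 - outer ν) else outer ν) (x i) (y i) *
            (θ (y i) * (starRingEnd ℂ) (θ (x i)))) := by
      intro x y
      rw [Finset.prod_mul_distrib]
      congr 1
      simp [outer, Matrix.vecMulVec_apply, tensorPow, Pi.star_apply, RCLike.star_def,
        ← Finset.prod_mul_distrib, map_prod]
    simp only [hterm]
    have step : ∀ x : Fin n → Fin d,
        ∑ y : Fin n → Fin d, ∏ i, ((if i ∈ E then (1 - outer ν) else outer ν) (x i) (y i) *
            (θ (y i) * (starRingEnd ℂ) (θ (x i))))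
        = ∏ i, ∑ b, ((if i ∈ E then (1 - outer ν) else outer ν) (x i) b *
            (θ b * (starRingEnd ℂ) (θ (x i)))) := by
      intro x
      rw [Finset.prod_univ_sum, Fintype.piFinset_univ]
    simp only [step]
    rw [show (∑ x : Fin n → Fin d, ∏ i, ∑ b, ((if i ∈ E then (1 - outer ν) else outer ν) (x i) b *
            (θ b * (starRingEnd ℂ) (θ (x i)))))
        = ∏ i : Fin n, ∑ a, ∑ b, ((if i ∈ E then (1 - outer ν) else outer ν) a b *
            (θ b * (starRingEnd ℂ) (θ a))) from by
      rw [Finset.prod_univ_sum, Fintype.piFinset_univ]]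
    have factor : ∀ i : Fin n,
        (∑ a, ∑ b, ((if i ∈ E then (1 - outer ν) else outer ν) a b *
            (θ b * (starRingEnd ℂ) (θ a))))
        = if i ∈ E then (1 - q) else q := by
      intro i
      by_cases h : i ∈ E
      · simp only [if_pos h]; exact key_in
      · simp only [if_neg h]; exact key_out
    rw [Finset.prod_congr rfl (fun i _ => factor i), Finset.prod_ite, Finset.prod_const,
      Finset.prod_const, Finset.filter_mem_eq_inter, Finset.univ_inter]
    congr 1
    rw [show Finset.filter (fun i => ¬ i ∈ E) Finset.univ = Eᶜ from by ext i; simp,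
      Finset.card_compl, Fintype.card_fin]
  rw [lhs_eq]
  -- regroup by cardinality
  have hset : Finset.univ.filter (fun E : Finset (Fin n) => E.card ≤ r)
      = (Finset.range (r+1)).biUnion (fun j => Finset.powersetCard j Finset.univ) := by
    ext E
    simp [Finset.mem_powersetCard_univ, Nat.lt_succ_iff]
  rw [hset, Finset.sum_biUnion (by
    intro a ha b hb hab
    simp only [Finset.disjoint_left, Finset.mem_powersetCard_univ]
    intro E hE hE'
    exact hab (hE ▸ hE'))]
  have qr : q = ((‖s‖ ^ 2 : ℝ) : ℂ) := by
    rw [Complex.sq_norm, Complex.normSq_eq_conj_mul_self]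
  push_cast
  refine Finset.sum_congr rfl fun j hj => ?_
  rw [Finset.sum_congr rfl (fun E hE => by
      rw [(Finset.mem_powersetCard_univ.mp hE : E.card = j)]),
    Finset.sum_const, Finset.card_powersetCard, Finset.card_univ, Fintype.card_fin,
    nsmul_eq_mul, qr]
  push_cast
  ring
end

section
/- Let ν, θ : Fin d → ℂ be unit vectors such that |⟨θ,ν⟩|² ≥ 1 − ε for some ε ∈ [0,1], let α > 0 be real, let n ≥ 1, and let r be a natural number with (ε+α)·n ≤ r ≤ n. Then the trace Tr(P^{r,ν} · Θ), where Θ = θ^{⊗n}(θ^{⊗n})†, is a real number satisfying Tr(P^{r,ν} · Θ) ≥ 1 − exp(−2α²n). -/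
open Matrix ComplexOrder

lemma double_sum_prod {d n : ℕ} (G : Fin n → Fin d → Fin d → ℂ) :
    ∑ x : Fin n → Fin d, ∑ y : Fin n → Fin d, ∏ i, G i (x i) (y i)
      = ∏ i, ∑ a, ∑ b, G i a b := by
  have h1 : ∀ x : Fin n → Fin d, ∑ y : Fin n → Fin d, ∏ i, G i (x i) (y i)
      = ∏ i, ∑ b, G i (x i) b := by
    intro x
    rw [← Fintype.piFinset_univ, Finset.sum_prod_piFinset]
  simp_rw [h1]
  rw [← Fintype.piFinset_univ]
  exact Finset.sum_prod_piFinset Finset.univ fun i c => ∑ b, G i c b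

lemma trace_eq {d : ℕ} (ν θ : Fin d → ℂ)
    (hθ : ∑ i, Complex.normSq (θ i) = 1)
    (n r : ℕ) :
    Matrix.trace (hammProj n r ν * outer (tensorPow n θ)) =
      ((∑ E ∈ Finset.univ.filter (fun E : Finset (Fin n) => E.card ≤ r),
        (1 - Complex.normSq (∑ i, (starRingEnd ℂ) (θ i) * ν i)) ^ E.card *
          Complex.normSq (∑ i, (starRingEnd ℂ) (θ i) * ν i) ^ (n - E.card) : ℝ) : ℂ) := by
  set s : ℂ := ∑ i, (starRingEnd ℂ) (θ i) * ν i with hs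
  set q : ℝ := Complex.normSq s with hqdef
  have expand : Matrix.trace (hammProj n r ν * outer (tensorPow n θ)) =
      ∑ E ∈ Finset.univ.filter (fun E : Finset (Fin n) => E.card ≤ r),
        ∏ i, ∑ a, ∑ b,
          ((if i ∈ E then (1 - outer ν) else outer ν) a b * (θ b * star (θ a))) := by
    rw [hammProj, Finset.sum_mul, Matrix.trace_sum]
    refine Finset.sum_congr rfl fun E _ => ?_
    rw [Matrix.trace]
    simp only [Matrix.diag_apply, Matrix.mul_apply, Matrix.of_apply]
    rw [← double_sum_prod (fun i a b =>
      ((if i ∈ E then (1 - outer ν) else outer ν) a b * (θ b * star (θ a))))]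
    refine Finset.sum_congr rfl fun x _ => Finset.sum_congr rfl fun y _ => ?_
    simp only [outer, Matrix.vecMulVec_apply, tensorPow, Pi.star_apply, star_prod]
    simp only [← Finset.prod_mul_distrib]
  rw [expand]
  have innerQ : ∑ a, ∑ b, (outer ν a b * (θ b * star (θ a))) = (q : ℂ) := by
    have : ∀ a b : Fin d, outer ν a b * (θ b * star (θ a))
        = ((starRingEnd ℂ) (θ a) * ν a) * ((starRingEnd ℂ) (ν b) * θ b) := by
      intro a b
      simp only [outer, Matrix.vecMulVec_apply, Pi.star_apply, Complex.star_def]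
      ring
    simp_rw [this, ← Finset.sum_mul_sum]
    have h2 : ∑ b, (starRingEnd ℂ) (ν b) * θ b = (starRingEnd ℂ) s := by
      rw [hs, map_sum]
      refine Finset.sum_congr rfl fun b _ => ?_
      rw [_root_.map_mul, Complex.conj_conj]
      ring
    rw [h2, hs, Complex.mul_conj]
  have innerP : ∑ a, ∑ b, ((1 - outer ν) a b * (θ b * star (θ a))) = ((1 - q : ℝ) : ℂ) := by
    have : ∀ a b : Fin d, (1 - outer ν) a b * (θ b * star (θ a))
        = (if a = b then 1 else 0) * (θ b * star (θ a)) - outer ν a b * (θ b * star (θ a)) := by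
      intro a b
      rw [Matrix.sub_apply, Matrix.one_apply]
      ring
    simp_rw [this, Finset.sum_sub_distrib, innerQ]
    have h1 : ∑ a, ∑ b, (if a = b then (1:ℂ) else 0) * (θ b * star (θ a)) = 1 := by
      have : ∀ a : Fin d, ∑ b, (if a = b then (1:ℂ) else 0) * (θ b * star (θ a))
          = θ a * star (θ a) := by
        intro a
        rw [Finset.sum_eq_single a (by intro b _ hb; simp [Ne.symm hb]) (by simp)]
        simp
      simp_rw [this, Complex.star_def, Complex.mul_conj]
      exact_mod_cast hθ
    rw [h1]
    push_cast
    ring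
  have hsplit : ∀ (E : Finset (Fin n)) (i : Fin n),
      (∑ a, ∑ b, ((if i ∈ E then (1 - outer ν) else outer ν) a b * (θ b * star (θ a))))
        = if i ∈ E then ((1 - q : ℝ) : ℂ) else ((q : ℝ) : ℂ) := by
    intro E i
    by_cases h : i ∈ E <;> simp only [h, if_true, if_false, innerP, innerQ]
  simp_rw [hsplit]
  push_cast
  refine Finset.sum_congr rfl fun E _ => ?_
  rw [Finset.prod_ite (fun _ => (1 - (q : ℂ))) (fun _ => ((q : ℝ) : ℂ)),
    Finset.prod_const, Finset.prod_const, Finset.filter_univ_mem]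
  have : (Finset.filter (fun x => x ∉ E) Finset.univ).card = n - E.card := by
    rw [Finset.filter_not, show Finset.filter (fun x => x ∈ E) Finset.univ = E from
      Finset.filter_univ_mem E, Finset.card_sdiff_of_subset (Finset.subset_univ E)]
    simp
  rw [this]

lemma sum_pow_card {n : ℕ} (a b : ℝ) :
    ∑ E : Finset (Fin n), a ^ E.card * b ^ (n - E.card) = (a + b) ^ n := by
  have h := Finset.prod_add (fun _ : Fin n => a) (fun _ : Fin n => b) Finset.univ
  rw [Finset.prod_const, Finset.powerset_univ] at h
  rw [Finset.card_univ, Fintype.card_fin] at h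
  rw [h]
  refine Finset.sum_congr rfl fun E _ => ?_
  rw [Finset.prod_const, Finset.prod_const, Finset.card_sdiff_of_subset (Finset.subset_univ E),
    Finset.card_univ, Fintype.card_fin]


lemma hoeff (p : ℝ) (hp0 : 0 ≤ p) (hp1 : p ≤ 1) (t : ℝ) (ht : 0 ≤ t) :
    (1 - p) + p * Real.exp t ≤ Real.exp (p * t + t ^ 2 / 8) := by
  set q : ℝ := 1 - p with hq
  have hq0 : 0 ≤ q := by simp [hq]; linarith
  set D : ℝ → ℝ := fun s => q + p * Real.exp s with hD
  have hpos : ∀ s : ℝ, 0 < D s := by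
    intro s
    rcases eq_or_lt_of_le hp0 with h | h
    · simp [hD, ← h, hq]
    · have := Real.exp_pos s
      have : 0 < p * Real.exp s := by positivity
      simp only [hD]; linarith
  have hDd : ∀ s, HasDerivAt D (p * Real.exp s) s := by
    intro s
    exact ((Real.hasDerivAt_exp s).const_mul p).const_add q
  set g : ℝ → ℝ := fun s => p + s / 4 - p * Real.exp s / D s with hg
  have hgd : ∀ s, HasDerivAt g (1 / 4 - p * Real.exp s * q / (D s) ^ 2) s := by
    intro s
    have h1 : HasDerivAt (fun s : ℝ => p + s / 4) (1 / 4) s := by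
      simpa using ((hasDerivAt_id s).div_const 4).const_add p
    have h2 : HasDerivAt (fun s => p * Real.exp s) (p * Real.exp s) s :=
      (Real.hasDerivAt_exp s).const_mul p
    have h3 := h2.div (hDd s) (ne_of_gt (hpos s))
    have h4 := h1.sub h3
    refine h4.congr_deriv ?_
    rw [show D s = q + p * Real.exp s from rfl]
    ring
  have hg' : ∀ s, 0 ≤ 1 / 4 - p * Real.exp s * q / (D s) ^ 2 := by
    intro s
    rw [sub_nonneg, div_le_iff₀ (pow_pos (hpos s) 2)]
    have h := sq_nonneg (q - p * Real.exp s)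
    have hds : (D s) ^ 2 = (q + p * Real.exp s) ^ 2 := rfl
    rw [hds]
    have key : ∀ a b : ℝ, b * a ≤ 1 / 4 * (a + b) ^ 2 := by
      intro a b; nlinarith [sq_nonneg (a - b)]
    exact key q (p * Real.exp s)
  have hgmono : Monotone g :=
    monotone_of_deriv_nonneg (fun s => (hgd s).differentiableAt) (by
      intro s; rw [(hgd s).deriv]; exact hg' s)
  have hg0 : g 0 = 0 := by
    simp [hg, hD, hq, Real.exp_zero]
  have hgnn : ∀ s, 0 ≤ s → 0 ≤ g s := by
    intro s hs
    rw [← hg0]; exact hgmono hs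
  set f : ℝ → ℝ := fun s => p * s + s ^ 2 / 8 - Real.log (D s) with hf
  have hfd : ∀ s, HasDerivAt f (g s) s := by
    intro s
    have h1 : HasDerivAt (fun s : ℝ => p * s + s ^ 2 / 8) (p + s / 4) s := by
      have := ((hasDerivAt_pow 2 s).div_const 8).const_add (p * s)
      have h2 : HasDerivAt (fun s : ℝ => p * s) p s := by
        simpa using (hasDerivAt_id s).const_mul p
      refine (h2.add ((hasDerivAt_pow 2 s).div_const 8)).congr_deriv ?_
      push_cast; ring
    have h3 := (hDd s).log (ne_of_gt (hpos s))
    exact h1.sub h3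
  have hfmono : MonotoneOn f (Set.Ici 0) := by
    apply monotoneOn_of_deriv_nonneg (convex_Ici 0)
      (fun s _ => (hfd s).differentiableAt.continuousAt.continuousWithinAt)
    · intro s hs
      exact (hfd s).differentiableAt.differentiableWithinAt
    · intro s hs
      rw [(hfd s).deriv]
      exact hgnn s (le_of_lt (by simpa using hs))
  have hf0 : f 0 = 0 := by
    simp [hf, hD, hq, Real.exp_zero]
  have hft : 0 ≤ f t := by
    rw [← hf0]
    exact hfmono Set.self_mem_Ici ht ht
  have : Real.log (D t) ≤ p * t + t ^ 2 / 8 := by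
    simp only [hf] at hft; linarith
  calc (1 - p) + p * Real.exp t = D t := rfl
    _ ≤ Real.exp (p * t + t ^ 2 / 8) := by
        rw [← Real.exp_log (hpos t)]
        exact Real.exp_le_exp.mpr this

lemma hoeff2 (p t : ℝ) (hp0 : 0 ≤ p) (hp1 : p ≤ 1) (ht : 0 ≤ t) :
    (1 - p) + p * Real.exp t ≤ Real.exp (p * t + t ^ 2 / 8) := hoeff p hp0 hp1 t ht

set_option maxHeartbeats 1000000 in
/-- if `|⟨θ,ν⟩|² ≥ 1 − ε`, the i.i.d. state `θ^{⊗n}` is almost entirely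
contained in the Hamming ball of radius `r ≥ (ε+α)n` around `ν^{⊗n}`. -/
theorem stmt3 {d : ℕ} (ν θ : Fin d → ℂ)
    (hν : ∑ i, Complex.normSq (ν i) = 1) (hθ : ∑ i, Complex.normSq (θ i) = 1)
    (ε : ℝ) (hε0 : 0 ≤ ε) (hε1 : ε ≤ 1)
    (hfid : 1 - ε ≤ ‖∑ i, (starRingEnd ℂ) (θ i) * ν i‖ ^ 2)
    (α : ℝ) (hα : 0 < α) (n : ℕ) (hn : 1 ≤ n) (r : ℕ)
    (hr1 : (ε + α) * n ≤ r) (hr2 : r ≤ n) :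
    (Matrix.trace (hammProj n r ν * outer (tensorPow n θ))).im = 0 ∧
      1 - Real.exp (-2 * α ^ 2 * n) ≤
        (Matrix.trace (hammProj n r ν * outer (tensorPow n θ))).re := by
  set s : ℂ := ∑ i, (starRingEnd ℂ) (θ i) * ν i with hs
  set q : ℝ := Complex.normSq s with hqdef
  set p : ℝ := 1 - q with hpdef
  have hq0 : 0 ≤ q := Complex.normSq_nonneg s
  have hq1 : q ≤ 1 := by
    have habs : ‖s‖ ≤ ∑ i, ‖θ i‖ * ‖ν i‖ := by
      calc ‖s‖ ≤ ∑ i, ‖(starRingEnd ℂ) (θ i) * ν i‖ :=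
            norm_sum_le _ _
        _ = ∑ i, ‖θ i‖ * ‖ν i‖ := by
            refine Finset.sum_congr rfl fun i _ => ?_
            rw [norm_mul, Complex.norm_conj]
    have hCS := Finset.sum_mul_sq_le_sq_mul_sq Finset.univ
      (fun i => ‖θ i‖) (fun i => ‖ν i‖)
    simp only [Complex.sq_norm] at hCS
    rw [hθ, hν] at hCS
    have h1 : ‖s‖ ^ 2 ≤ (∑ i, ‖θ i‖ * ‖ν i‖) ^ 2 :=
      pow_le_pow_left₀ (norm_nonneg s) habs 2
    rw [hqdef, ← Complex.sq_norm]
    linarith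
  have hp0 : 0 ≤ p := by rw [hpdef]; linarith
  have hp1 : p ≤ 1 := by rw [hpdef]; linarith
  have hpε : p ≤ ε := by
    rw [Complex.sq_norm] at hfid
    rw [hpdef]; linarith
  -- the trace equals the real sum S
  have htr := trace_eq ν θ hθ n r
  rw [← hs, ← hqdef, ← hpdef] at htr
  set S : ℝ := ∑ E ∈ Finset.univ.filter (fun E : Finset (Fin n) => E.card ≤ r),
      p ^ E.card * q ^ (n - E.card) with hS
  set T : ℝ := ∑ E ∈ Finset.univ.filter (fun E : Finset (Fin n) => ¬ E.card ≤ r),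
      p ^ E.card * q ^ (n - E.card) with hT
  have hST : S + T = 1 := by
    rw [hS, hT, Finset.sum_filter_add_sum_filter_not]
    have := sum_pow_card (n := n) p q
    rw [this]
    rw [hpdef]
    norm_num
  -- tail bound
  set t0 : ℝ := 4 * α with ht0
  have ht00 : 0 ≤ t0 := by positivity
  set c : ℝ := Real.exp t0 with hc
  have hc0 : 0 < c := Real.exp_pos t0
  have key1 : Real.exp (t0 * r) * T ≤ (p * c + q) ^ n := by
    rw [hT, Finset.mul_sum]
    calc ∑ E ∈ Finset.univ.filter (fun E : Finset (Fin n) => ¬ E.card ≤ r),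
          Real.exp (t0 * r) * (p ^ E.card * q ^ (n - E.card))
        ≤ ∑ E ∈ Finset.univ.filter (fun E : Finset (Fin n) => ¬ E.card ≤ r),
          (p * c) ^ E.card * q ^ (n - E.card) := by
          refine Finset.sum_le_sum fun E hE => ?_
          have hcard : r ≤ E.card := le_of_not_ge (by
            simpa using (Finset.mem_filter.mp hE).2)
          have h1 : Real.exp (t0 * r) ≤ c ^ E.card := by
            rw [hc, ← Real.exp_nat_mul]
            apply Real.exp_le_exp.mpr
            have : (r : ℝ) ≤ (E.card : ℝ) := by exact_mod_cast hcard
            nlinarith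
          rw [mul_pow]
          calc Real.exp (t0 * r) * (p ^ E.card * q ^ (n - E.card))
              ≤ c ^ E.card * (p ^ E.card * q ^ (n - E.card)) := by
                apply mul_le_mul_of_nonneg_right h1 (by positivity)
            _ = p ^ E.card * c ^ E.card * q ^ (n - E.card) := by ring
      _ ≤ ∑ E : Finset (Fin n), (p * c) ^ E.card * q ^ (n - E.card) := by
          apply Finset.sum_le_sum_of_subset_of_nonneg (Finset.filter_subset _ _)
          intro E _ _
          positivity
      _ = (p * c + q) ^ n := sum_pow_card _ _
  have key2 : (p * c + q) ^ n ≤ Real.exp (n * (p * t0 + t0 ^ 2 / 8)) := by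
    have h1 : p * c + q ≤ Real.exp (p * t0 + t0 ^ 2 / 8) := by
      have := hoeff2 p t0 hp0 hp1 ht00
      rw [hc]
      rw [hpdef] at this ⊢
      linarith
    calc (p * c + q) ^ n ≤ (Real.exp (p * t0 + t0 ^ 2 / 8)) ^ n :=
          pow_le_pow_left₀ (by positivity) h1 n
      _ = Real.exp (n * (p * t0 + t0 ^ 2 / 8)) := (Real.exp_nat_mul _ n).symm
  have hTbound : T ≤ Real.exp (-2 * α ^ 2 * n) := by
    have h3 : Real.exp (t0 * r) * T ≤ Real.exp (n * (p * t0 + t0 ^ 2 / 8)) :=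
      le_trans key1 key2
    have h4 : T ≤ Real.exp (n * (p * t0 + t0 ^ 2 / 8)) / Real.exp (t0 * r) := by
      rw [le_div_iff₀ (Real.exp_pos _)]
      linarith [h3]
    calc T ≤ Real.exp (n * (p * t0 + t0 ^ 2 / 8)) / Real.exp (t0 * r) := h4
      _ = Real.exp (n * (p * t0 + t0 ^ 2 / 8) - t0 * r) := (Real.exp_sub _ _).symm
      _ ≤ Real.exp (-2 * α ^ 2 * n) := by
          apply Real.exp_le_exp.mpr
          have hpn : p * n ≤ ε * n := by
            apply mul_le_mul_of_nonneg_right hpε (Nat.cast_nonneg n)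
          have hrn : (ε + α) * n ≤ (r : ℝ) := hr1
          have hexp : (ε + α) * (n:ℝ) = ε * n + α * n := by ring
          have h5 : p * (n:ℝ) + α * n ≤ (r:ℝ) := by linarith
          have h6 : 4 * α * (p * (n:ℝ) + α * n) ≤ 4 * α * r :=
            mul_le_mul_of_nonneg_left h5 (by positivity)
          rw [ht0]
          have h7 : (n:ℝ) * (p * (4 * α) + (4 * α) ^ 2 / 8) - 4 * α * ↑r
              = (4 * α * (p * ↑n + α * ↑n) - 4 * α * ↑r) - 2 * α ^ 2 * ↑n := by ring
          rw [h7]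
          linarith [h6]
  have hSbound : 1 - Real.exp (-2 * α ^ 2 * n) ≤ S := by linarith
  rw [htr]
  constructor
  · simp
  · simpa using hSbound
end

section
/- Let 0 < ε ≤ 1/2, let n ≥ 1, let R be a finite type, set r = ⌊εn⌋, and let σ : R × (Fin n → Fin 2 × Fin 2) → ℂ be a unit vector satisfying (1_R ⊗ P^{r,Φ⁺})·σ = σ, where P^{r,Φ⁺} is the Hamming-ball projector on n subsystems of dimension 4 (indexed by Fin 2 × Fin 2) built from the EPR vector Φ⁺. Then the reduced matrix σ_S of σ on the S-components satisfies σ_S ≤ 2^{−(1−ε−h(ε))·n} · 1, i.e., 2^{−(1−ε−h(ε))n}·1 − σ_S is positive semidefinite. -/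
open Matrix ComplexOrder

/-- The EPR vector `Φ⁺` on `Fin 2 × Fin 2`. -/
noncomputable def EPR : Fin 2 × Fin 2 → ℂ :=
  fun p => if p.1 = p.2 then ((1 / Real.sqrt 2 : ℝ) : ℂ) else 0

/-- Reduced matrix on the `S`-components of a vector on `R × (Fin n → P × S)`. -/
noncomputable def redS {R P S : Type} [Fintype R] [Fintype P] {n : ℕ}
    (ψ : R × (Fin n → P × S) → ℂ) : Matrix (Fin n → S) (Fin n → S) ℂ :=
  Matrix.of fun s s' => ∑ ρ : R, ∑ p : Fin n → P,
    ψ (ρ, fun i => (p i, s i)) * (starRingEnd ℂ) (ψ (ρ, fun i => (p i, s' i)))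

/-- Binary entropy function. -/
noncomputable def binEnt (p : ℝ) : ℝ :=
  -p * Real.logb 2 p - (1 - p) * Real.logb 2 (1 - p)


namespace Stmt6Aux
open Finset

lemma choose_sum_le (ε : ℝ) (hε0 : 0 < ε) (hε1 : ε ≤ 1/2) (n r : ℕ)
    (hrn : r ≤ n) (hr : (r:ℝ) ≤ ε * n) :
    ∑ k ∈ range (r+1), (n.choose k : ℝ) ≤ (2:ℝ) ^ (binEnt ε * n) := by
  have h1ε : 0 < 1 - ε := by linarith
  have hεε : ε ≤ 1 - ε := by linarith
  have hD0 : (0:ℝ) < ε ^ r * (1-ε) ^ (n - r) := by positivity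
  -- step 1 : ∑ choose * (ε^r (1-ε)^(n-r)) ≤ 1
  have step1 : (∑ k ∈ range (r+1), (n.choose k : ℝ)) * (ε ^ r * (1-ε) ^ (n - r)) ≤ 1 := by
    rw [Finset.sum_mul]
    have hterm : ∀ k ∈ range (r+1),
        (n.choose k : ℝ) * (ε ^ r * (1-ε) ^ (n - r)) ≤ ε ^ k * (1-ε) ^ (n - k) * (n.choose k : ℝ) := by
      intro k hk
      rw [mem_range] at hk
      have hkr : k ≤ r := Nat.lt_succ_iff.mp hk
      have h1 : ε ^ r = ε ^ k * ε ^ (r - k) := by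
        rw [← pow_add]; congr 1; omega
      have h2 : (1-ε) ^ (n - k) = (1-ε) ^ (r - k) * (1-ε) ^ (n - r) := by
        rw [← pow_add]; congr 1; omega
      have h3 : ε ^ (r-k) ≤ (1-ε) ^ (r-k) := pow_le_pow_left₀ hε0.le hεε _
      calc (n.choose k : ℝ) * (ε ^ r * (1-ε) ^ (n - r))
          = (ε ^ k * ((1-ε) ^ (n-r) * ε ^ (r-k))) * (n.choose k : ℝ) := by rw [h1]; ring
        _ ≤ (ε ^ k * ((1-ε) ^ (n-r) * (1-ε) ^ (r-k))) * (n.choose k : ℝ) := by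
            have h4 : (1-ε) ^ (n-r) * ε ^ (r-k) ≤ (1-ε) ^ (n-r) * (1-ε)^(r-k) :=
              mul_le_mul_of_nonneg_left h3 (by positivity)
            exact mul_le_mul_of_nonneg_right
              (mul_le_mul_of_nonneg_left h4 (by positivity)) (Nat.cast_nonneg _)
        _ = ε ^ k * (1-ε) ^ (n - k) * (n.choose k : ℝ) := by rw [h2]; ring
    calc ∑ k ∈ range (r+1), (n.choose k:ℝ) * (ε ^ r * (1-ε) ^ (n-r))
        ≤ ∑ k ∈ range (r+1), ε ^ k * (1-ε) ^ (n - k) * (n.choose k : ℝ) :=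
          Finset.sum_le_sum hterm
      _ ≤ ∑ k ∈ range (n+1), ε ^ k * (1-ε) ^ (n - k) * (n.choose k : ℝ) := by
          apply Finset.sum_le_sum_of_subset_of_nonneg
          · exact Finset.range_subset_range.mpr (by omega)
          · intro k _ _; positivity
      _ = (ε + (1-ε)) ^ n := (add_pow ε (1-ε) n).symm
      _ = 1 := by norm_num
  -- step 2 : 2^(binEnt ε * n) = (ε ^(ε n) * (1-ε)^((1-ε) n))⁻¹
  have hlogε : (2:ℝ) ^ (Real.logb 2 ε) = ε := Real.rpow_logb (by norm_num) (by norm_num) hε0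
  have hlog1ε : (2:ℝ) ^ (Real.logb 2 (1-ε)) = 1-ε := Real.rpow_logb (by norm_num) (by norm_num) h1ε
  have step2 : (2:ℝ) ^ (binEnt ε * n) = (ε ^ (ε * n) * (1-ε) ^ ((1-ε) * n))⁻¹ := by
    have : binEnt ε * n = Real.logb 2 ε * (-(ε * n)) + Real.logb 2 (1-ε) * (-((1-ε)*n)) := by
      unfold binEnt; ring
    rw [this, Real.rpow_add (by norm_num), Real.rpow_mul (by norm_num),
        Real.rpow_mul (by norm_num), hlogε, hlog1ε,
        Real.rpow_neg hε0.le, Real.rpow_neg h1ε.le, mul_inv]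
  -- step 3 : ε^(εn) * (1-ε)^((1-ε)n) ≤ ε^r * (1-ε)^(n-r)
  have step3 : ε ^ (ε * n) * (1-ε) ^ ((1-ε) * n) ≤ ε ^ r * (1-ε) ^ (n - r) := by
    set δ : ℝ := ε * n - r with hδ
    have hδ0 : 0 ≤ δ := by simp [hδ]; linarith
    have e1 : ε ^ (ε * n) = ε ^ (r:ℝ) * ε ^ δ := by
      rw [← Real.rpow_add hε0]; congr 1; simp [hδ]
    have e2 : (1-ε) ^ ((1-ε) * n) * (1-ε) ^ δ = (1-ε) ^ ((n:ℝ) - r) := by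
      rw [← Real.rpow_add h1ε]; congr 1; simp [hδ]; ring
    have e3 : ε ^ δ ≤ (1-ε) ^ δ := Real.rpow_le_rpow hε0.le hεε hδ0
    have e4 : ε ^ (r:ℝ) = ε ^ r := by rw [Real.rpow_natCast]
    have e5 : (1-ε) ^ ((n:ℝ) - r) = (1-ε) ^ (n - r) := by
      rw [← Nat.cast_sub hrn, Real.rpow_natCast]
    calc ε ^ (ε*n) * (1-ε)^((1-ε)*n)
        = ε ^ (r:ℝ) * (ε ^ δ * (1-ε)^((1-ε)*n)) := by rw [e1]; ring
      _ ≤ ε ^ (r:ℝ) * ((1-ε) ^ δ * (1-ε)^((1-ε)*n)) := by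
          apply mul_le_mul_of_nonneg_left _ (Real.rpow_nonneg hε0.le _)
          apply mul_le_mul_of_nonneg_right e3 (Real.rpow_nonneg h1ε.le _)
      _ = ε ^ r * (1-ε) ^ (n - r) := by rw [← e5, ← e2, e4]; ring
  -- combine
  have hD0' : (0:ℝ) < ε ^ (ε*n) * (1-ε) ^ ((1-ε)*n) := by positivity
  have : ∑ k ∈ range (r+1), (n.choose k : ℝ) ≤ (ε ^ r * (1-ε) ^ (n-r))⁻¹ := by
    rw [← le_div_iff₀ hD0] at step1; simpa [one_div] using step1
  refine this.trans ?_
  rw [step2]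
  exact inv_anti₀ hD0' step3

lemma weight_bound (ε : ℝ) (hε0 : 0 < ε) (hε1 : ε ≤ 1/2) (n : ℕ) :
    ∑ E ∈ Finset.univ.filter (fun E : Finset (Fin n) => E.card ≤ ⌊ε*n⌋₊),
      ((2:ℝ) ^ E.card / 2 ^ n) ≤ (2:ℝ) ^ (-(1-ε-binEnt ε)*(n:ℝ)) := by
  set r := ⌊ε*n⌋₊ with hrdef
  have hr : (r:ℝ) ≤ ε * n := Nat.floor_le (by positivity)
  have hrn : r ≤ n := by
    have : (r:ℝ) ≤ (n:ℝ) := hr.trans (by nlinarith [Nat.cast_nonneg (α := ℝ) n])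
    exact_mod_cast this
  -- group by cardinality
  have hgroup : ∑ E ∈ Finset.univ.filter (fun E : Finset (Fin n) => E.card ≤ r),
      ((2:ℝ) ^ E.card / 2 ^ n)
      = ∑ k ∈ range (r+1), (n.choose k : ℝ) * 2 ^ k / 2 ^ n := by
    rw [← Finset.sum_fiberwise_of_maps_to (g := fun E : Finset (Fin n) => E.card)
      (t := range (r+1)) (fun E hE => by
        simp only [mem_filter, mem_univ, true_and] at hE
        exact mem_range.mpr (Nat.lt_succ_of_le hE))]
    apply Finset.sum_congr rfl
    intro k hk
    rw [mem_range] at hk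
    have hfib : Finset.filter (fun E : Finset (Fin n) => E.card = k)
        (Finset.univ.filter (fun E : Finset (Fin n) => E.card ≤ r))
        = Finset.powersetCard k Finset.univ := by
      ext E
      simp only [mem_filter, mem_univ, true_and, Finset.mem_powersetCard_univ]
      constructor
      · rintro ⟨-, h⟩; exact h
      · intro h; exact ⟨by omega, h⟩
    rw [hfib]
    have : ∀ E ∈ Finset.powersetCard k (Finset.univ : Finset (Fin n)),
        ((2:ℝ) ^ E.card / 2 ^ n) = (2:ℝ)^k / 2^n := by
      intro E hE; rw [Finset.mem_powersetCard_univ] at hE; rw [hE]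
    rw [Finset.sum_congr rfl this, Finset.sum_const, Finset.card_powersetCard,
        Finset.card_univ, Fintype.card_fin, nsmul_eq_mul, mul_div_assoc]
  rw [hgroup]
  -- bound
  have hchoose := choose_sum_le ε hε0 hε1 n r hrn hr
  have hterm : ∀ k ∈ range (r+1), (n.choose k : ℝ) * 2 ^ k / 2 ^ n
      ≤ (n.choose k : ℝ) * 2 ^ (ε * (n:ℝ)) / 2 ^ n := by
    intro k hk
    rw [mem_range] at hk
    have h2k : (2:ℝ) ^ k ≤ (2:ℝ) ^ (ε * (n:ℝ)) := by
      rw [← Real.rpow_natCast 2 k]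
      apply Real.rpow_le_rpow_of_exponent_le (by norm_num)
      calc (k:ℝ) ≤ (r:ℝ) := by exact_mod_cast Nat.lt_succ_iff.mp hk
        _ ≤ ε * n := hr
    gcongr
  calc ∑ k ∈ range (r+1), (n.choose k : ℝ) * 2 ^ k / 2 ^ n
      ≤ ∑ k ∈ range (r+1), (n.choose k : ℝ) * 2 ^ (ε * (n:ℝ)) / 2 ^ n :=
        Finset.sum_le_sum hterm
    _ = (∑ k ∈ range (r+1), (n.choose k : ℝ)) * 2 ^ (ε * (n:ℝ)) / 2 ^ n := by
        rw [Finset.sum_mul, Finset.sum_div]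
    _ ≤ (2:ℝ) ^ (binEnt ε * n) * 2 ^ (ε * (n:ℝ)) / 2 ^ n := by
        gcongr
    _ = (2:ℝ) ^ (-(1-ε-binEnt ε)*(n:ℝ)) := by
        rw [show -(1-ε-binEnt ε)*(n:ℝ) = binEnt ε * n + ε*(n:ℝ) - (n:ℕ) by push_cast; ring,
          Real.rpow_sub (by norm_num : (0:ℝ) < 2), Real.rpow_add (by norm_num : (0:ℝ) < 2),
          Real.rpow_natCast]

end Stmt6Aux

namespace Stmt6Aux

abbrev α4 : Type := Fin 2 × Fin 2

lemma conj_EPR (a : α4) : (starRingEnd ℂ) (EPR a) = EPR a := by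
  unfold EPR; split <;> simp

lemma EPR_sum : ∑ c : α4, (starRingEnd ℂ) (EPR c) * EPR c = 1 := by
  have h2 : (Real.sqrt 2) * (Real.sqrt 2) = 2 := Real.mul_self_sqrt (by norm_num)
  unfold EPR
  rw [Fintype.sum_prod_type]
  simp only [Fin.sum_univ_two]
  norm_num
  rw [show ((Real.sqrt 2 : ℝ) : ℂ)⁻¹ * ((Real.sqrt 2 : ℝ) : ℂ)⁻¹ = (((Real.sqrt 2 * Real.sqrt 2 : ℝ)) : ℂ)⁻¹ by push_cast; ring]
  rw [h2]
  push_cast; ring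

lemma outer_apply {ι : Type} (v : ι → ℂ) (a b : ι) :
    outer v a b = v a * (starRingEnd ℂ) (v b) := by
  simp [outer, Matrix.vecMulVec_apply, Pi.star_apply, RCLike.star_def]

lemma outer_EPR_mul : outer EPR * outer EPR = outer EPR := by
  ext a b
  rw [Matrix.mul_apply]
  simp only [outer_apply]
  rw [show ∑ c : α4, EPR a * (starRingEnd ℂ) (EPR c) * (EPR c * (starRingEnd ℂ) (EPR b))
      = (EPR a * (starRingEnd ℂ) (EPR b)) * ∑ c : α4, (starRingEnd ℂ) (EPR c) * EPR c by
    rw [Finset.mul_sum]; apply Finset.sum_congr rfl; intros; ring]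
  rw [EPR_sum, mul_one]

lemma outer_EPR_herm (a b : α4) : (starRingEnd ℂ) (outer EPR a b) = outer EPR b a := by
  simp only [outer_apply, _root_.map_mul, RingHomCompTriple.comp_apply, Complex.conj_conj]
  · rw [mul_comm]; simp

/-- per-site matrices -/
noncomputable def sm {n : ℕ} (E : Finset (Fin n)) (i : Fin n) : Matrix α4 α4 ℂ :=
  if i ∈ E then 1 - outer EPR else outer EPR

noncomputable def sm' {n : ℕ} (E : Finset (Fin n)) (i : Fin n) : Matrix α4 α4 ℂ :=
  if i ∈ E then 1 else outer EPR

lemma sm_mul_sm {n : ℕ} (E : Finset (Fin n)) (i : Fin n) : sm E i * sm E i = sm E i := by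
  unfold sm; split <;>
  simp [Matrix.mul_sub, Matrix.sub_mul, outer_EPR_mul]

lemma sm'_mul_sm {n : ℕ} (E : Finset (Fin n)) (i : Fin n) : sm' E i * sm E i = sm E i := by
  unfold sm sm'; split <;>
  simp [Matrix.mul_sub, Matrix.sub_mul, outer_EPR_mul]

lemma sm_mul_sm_ne {n : ℕ} (E E' : Finset (Fin n)) (i : Fin n)
    (h : (i ∈ E ∧ i ∉ E') ∨ (i ∉ E ∧ i ∈ E')) : sm E i * sm E' i = 0 := by
  unfold sm
  rcases h with ⟨h1, h2⟩ | ⟨h1, h2⟩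
  · rw [if_pos h1, if_neg h2]
    simp [Matrix.sub_mul, outer_EPR_mul]
  · rw [if_neg h1, if_pos h2]
    simp [Matrix.mul_sub, outer_EPR_mul]

lemma sm_herm {n : ℕ} (E : Finset (Fin n)) (i : Fin n) (a b : α4) :
    (starRingEnd ℂ) (sm E i a b) = sm E i b a := by
  unfold sm; split
  · simp only [Matrix.sub_apply, map_sub, outer_EPR_herm]
    congr 1
    simp [Matrix.one_apply]
    split <;> simp_all [eq_comm]
  · exact outer_EPR_herm a b

/-- tensor-product kernel multiplication -/
lemma tensor_mul {n : ℕ} (A B : Fin n → Matrix α4 α4 ℂ) (y y'' : Fin n → α4) :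
    ∑ y' : Fin n → α4, (∏ i, A i (y i) (y' i)) * (∏ i, B i (y' i) (y'' i))
      = ∏ i, (A i * B i) (y i) (y'' i) := by
  have : ∀ y' : Fin n → α4, (∏ i, A i (y i) (y' i)) * (∏ i, B i (y' i) (y'' i))
      = ∏ i, (A i (y i) (y' i) * B i (y' i) (y'' i)) := fun y' => (Finset.prod_mul_distrib).symm
  simp only [this, Matrix.mul_apply]
  rw [Finset.prod_univ_sum]
  rw [← Fintype.piFinset_univ]


variable {n : ℕ}

/-- tensor kernel for `E` (term of `hammProj`) -/
noncomputable def mker (E : Finset (Fin n)) : (Fin n → α4) → (Fin n → α4) → ℂ :=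
  fun y y' => ∏ i, sm E i (y i) (y' i)

/-- relaxed kernel: identity on `E`, projector off `E` -/
noncomputable def mker' (E : Finset (Fin n)) : (Fin n → α4) → (Fin n → α4) → ℂ :=
  fun y y' => ∏ i, sm' E i (y i) (y' i)

lemma hamm_apply (n r : ℕ) (x y : Fin n → α4) :
    hammProj n r EPR x y
      = ∑ E ∈ Finset.univ.filter (fun E : Finset (Fin n) => E.card ≤ r), mker E x y := by
  unfold hammProj mker sm
  rw [Matrix.sum_apply]
  rfl

lemma mker_idem (E : Finset (Fin n)) (y y'' : Fin n → α4) :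
    ∑ y', mker E y y' * mker E y' y'' = mker E y y'' := by
  unfold mker
  rw [tensor_mul]
  exact Finset.prod_congr rfl fun i _ => by rw [sm_mul_sm]

lemma mker'_mul (E : Finset (Fin n)) (y y'' : Fin n → α4) :
    ∑ y', mker' E y y' * mker E y' y'' = mker E y y'' := by
  unfold mker mker'
  rw [tensor_mul]
  exact Finset.prod_congr rfl fun i _ => by rw [sm'_mul_sm]

lemma mker_herm (E : Finset (Fin n)) (y y' : Fin n → α4) :
    (starRingEnd ℂ) (mker E y y') = mker E y' y := by
  unfold mker
  rw [map_prod]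
  exact Finset.prod_congr rfl fun i _ => sm_herm E i _ _


/-- the Hamming ball of subsets -/
def ball (n r : ℕ) : Finset (Finset (Fin n)) :=
  Finset.univ.filter (fun E => E.card ≤ r)

section Decomp
variable {R : Type} [Fintype R] (σ : R × (Fin n → α4) → ℂ)

/-- component of `σ` along `mker E` -/
noncomputable def sigE (E : Finset (Fin n)) (ρ : R) (y : Fin n → α4) : ℂ :=
  ∑ y', mker E y y' * σ (ρ, y')

variable {σ} {r : ℕ}

lemma sigE_sum (hproj : ∀ (ρ : R) (x : Fin n → α4),
      ∑ y, hammProj n r EPR x y * σ (ρ, y) = σ (ρ, x)) (ρ : R) (y : Fin n → α4) :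
    ∑ E ∈ ball n r, sigE σ E ρ y = σ (ρ, y) := by
  calc ∑ E ∈ ball n r, sigE σ E ρ y
      = ∑ y', ∑ E ∈ ball n r, mker E y y' * σ (ρ, y') := Finset.sum_comm
    _ = ∑ y', hammProj n r EPR y y' * σ (ρ, y') := by
        refine Finset.sum_congr rfl fun y' _ => ?_
        rw [hamm_apply, Finset.sum_mul]
        rfl
    _ = σ (ρ, y) := hproj ρ y

lemma sigE_selfinner (E : Finset (Fin n)) (ρ : R) :
    ∑ y, sigE σ E ρ y * (starRingEnd ℂ) (sigE σ E ρ y)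
      = ∑ y, σ (ρ, y) * (starRingEnd ℂ) (sigE σ E ρ y) := by
  have hconj : ∀ y, (starRingEnd ℂ) (sigE σ E ρ y)
      = ∑ y'', mker E y'' y * (starRingEnd ℂ) (σ (ρ, y'')) := by
    intro y
    unfold sigE
    rw [map_sum]
    exact Finset.sum_congr rfl fun y'' _ => by rw [_root_.map_mul, mker_herm]
  calc ∑ y, sigE σ E ρ y * (starRingEnd ℂ) (sigE σ E ρ y)
      = ∑ y, ∑ y', ∑ y'', (mker E y y' * σ (ρ, y'))
          * (mker E y'' y * (starRingEnd ℂ) (σ (ρ, y''))) := by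
        refine Finset.sum_congr rfl fun y _ => ?_
        rw [hconj, sigE, Finset.sum_mul_sum]
    _ = ∑ y', ∑ y'', ∑ y, (mker E y y' * σ (ρ, y'))
          * (mker E y'' y * (starRingEnd ℂ) (σ (ρ, y''))) := by
        rw [Finset.sum_comm]
        exact Finset.sum_congr rfl fun y' _ => Finset.sum_comm
    _ = ∑ y', ∑ y'', (σ (ρ, y') * (starRingEnd ℂ) (σ (ρ, y''))) *
          ∑ y, mker E y'' y * mker E y y' := by
        refine Finset.sum_congr rfl fun y' _ => Finset.sum_congr rfl fun y'' _ => ?_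
        rw [Finset.mul_sum]
        exact Finset.sum_congr rfl fun y _ => by ring
    _ = ∑ y', ∑ y'', (σ (ρ, y') * (starRingEnd ℂ) (σ (ρ, y''))) * mker E y'' y' := by
        refine Finset.sum_congr rfl fun y' _ => Finset.sum_congr rfl fun y'' _ => ?_
        rw [mker_idem]
    _ = ∑ y', σ (ρ, y') * ∑ y'', mker E y'' y' * (starRingEnd ℂ) (σ (ρ, y'')) := by
        refine Finset.sum_congr rfl fun y' _ => ?_
        rw [Finset.mul_sum]
        exact Finset.sum_congr rfl fun y'' _ => by ring
    _ = ∑ y, σ (ρ, y) * (starRingEnd ℂ) (sigE σ E ρ y) := by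
        refine Finset.sum_congr rfl fun y _ => ?_
        rw [hconj]

lemma sigE_normSq_sum (hproj : ∀ (ρ : R) (x : Fin n → α4),
      ∑ y, hammProj n r EPR x y * σ (ρ, y) = σ (ρ, x)) (ρ : R) :
    ∑ E ∈ ball n r, ∑ y, Complex.normSq (sigE σ E ρ y)
      = ∑ y, Complex.normSq (σ (ρ, y)) := by
  have hre : ∀ {ι : Type} (s : Finset ι) (f : ι → ℂ),
      ∑ y ∈ s, Complex.normSq (f y) = (∑ y ∈ s, f y * (starRingEnd ℂ) (f y)).re := by
    intro ι s f
    rw [Complex.re_sum]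
    exact Finset.sum_congr rfl fun y _ => by rw [Complex.mul_conj, Complex.ofReal_re]
  calc ∑ E ∈ ball n r, ∑ y, Complex.normSq (sigE σ E ρ y)
      = ∑ E ∈ ball n r, (∑ y, σ (ρ, y) * (starRingEnd ℂ) (sigE σ E ρ y)).re := by
        refine Finset.sum_congr rfl fun E _ => ?_
        rw [hre, sigE_selfinner]
    _ = (∑ y, σ (ρ, y) * (starRingEnd ℂ) (∑ E ∈ ball n r, sigE σ E ρ y)).re := by
        rw [← Complex.re_sum, Finset.sum_comm]
        congr 1
        refine Finset.sum_congr rfl fun y _ => ?_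
        rw [map_sum, Finset.mul_sum]
    _ = ∑ y, Complex.normSq (σ (ρ, y)) := by
        rw [hre]
        congr 1
        refine Finset.sum_congr rfl fun y _ => ?_
        rw [sigE_sum hproj]

end Decomp


section Split
variable {n : ℕ}

/-- merge a function on `E` and one on `Eᶜ` -/
def mg {γ : Type} (E : Finset (Fin n)) (a : {i : Fin n // i ∈ E} → γ)
    (b : {i : Fin n // i ∉ E} → γ) : Fin n → γ :=
  fun i => if h : i ∈ E then a ⟨i, h⟩ else b ⟨i, h⟩

lemma mg_mem {γ : Type} (E : Finset (Fin n)) (a : {i : Fin n // i ∈ E} → γ)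
    (b : {i : Fin n // i ∉ E} → γ) (i : {i : Fin n // i ∈ E}) : mg E a b i.1 = a i := by
  obtain ⟨i, hi⟩ := i
  simp [mg, hi]

lemma mg_not_mem {γ : Type} (E : Finset (Fin n)) (a : {i : Fin n // i ∈ E} → γ)
    (b : {i : Fin n // i ∉ E} → γ) (i : {i : Fin n // i ∉ E}) : mg E a b i.1 = b i := by
  obtain ⟨i, hi⟩ := i
  simp [mg, hi]

lemma sum_split {γ M : Type} [Fintype γ] [AddCommMonoid M] (E : Finset (Fin n))
    (F : (Fin n → γ) → M) :
    ∑ f, F f = ∑ a : {i : Fin n // i ∈ E} → γ, ∑ b : {i : Fin n // i ∉ E} → γ, F (mg E a b) := by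
  rw [← Equiv.sum_comp (Equiv.piEquivPiSubtypeProd (fun i : Fin n => i ∈ E) (fun _ => γ)).symm F,
    Fintype.sum_prod_type]
  rfl

lemma prod_split {M : Type} [CommMonoid M] (E : Finset (Fin n)) (f : Fin n → M) :
    ∏ i, f i = (∏ i : {i : Fin n // i ∈ E}, f i.1) * ∏ i : {i : Fin n // i ∉ E}, f i.1 := by
  rw [← Finset.prod_mul_prod_compl E f]
  congr 1
  · exact Finset.prod_subtype E (fun x => Iff.rfl) (fun i => f i)
  · exact Finset.prod_subtype Eᶜ (fun x => Finset.mem_compl) (fun i => f i)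

end Split


section Key
variable {n : ℕ}

/-- product of EPR amplitudes off `E` -/
noncomputable def dOut (E : Finset (Fin n)) (y : Fin n → α4) : ℂ :=
  ∏ i : {i : Fin n // i ∉ E}, EPR (y i.1)

/-- indicator of agreement on `E` -/
noncomputable def indE (E : Finset (Fin n)) (y y' : Fin n → α4) : ℂ :=
  if (∀ i : {i : Fin n // i ∈ E}, y i.1 = y' i.1) then 1 else 0

lemma mker'_eq (E : Finset (Fin n)) (y y' : Fin n → α4) :
    mker' E y y' = indE E y y' * (dOut E y * (starRingEnd ℂ) (dOut E y')) := by
  unfold mker'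
  rw [prod_split E]
  have h1 : (∏ i : {i : Fin n // i ∈ E}, sm' E i.1 (y i.1) (y' i.1)) = indE E y y' := by
    unfold indE
    calc ∏ i : {i : Fin n // i ∈ E}, sm' E i.1 (y i.1) (y' i.1)
        = ∏ i : {i : Fin n // i ∈ E}, (if y i.1 = y' i.1 then (1:ℂ) else 0) := by
          refine Finset.prod_congr rfl fun i _ => ?_
          rw [show sm' E i.1 = 1 by rw [sm', if_pos i.2], Matrix.one_apply]
      _ = _ := by rw [Finset.prod_boole]; simp
  have h2 : (∏ i : {i : Fin n // i ∉ E}, sm' E i.1 (y i.1) (y' i.1))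
      = dOut E y * (starRingEnd ℂ) (dOut E y') := by
    unfold dOut
    rw [map_prod, ← Finset.prod_mul_distrib]
    refine Finset.prod_congr rfl fun i _ => ?_
    rw [show sm' E i.1 = outer EPR by rw [sm', if_neg i.2], outer_apply]
  rw [h1, h2]

lemma z_struct (E : Finset (Fin n)) (z : (Fin n → α4) → ℂ)
    (hz : ∀ y, ∑ y', mker' E y y' * z y' = z y) (y : Fin n → α4) :
    z y = dOut E y * ∑ y', indE E y y' * ((starRingEnd ℂ) (dOut E y') * z y') := by
  conv_lhs => rw [← hz y]
  rw [Finset.mul_sum]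
  refine Finset.sum_congr rfl fun y' _ => ?_
  rw [mker'_eq]; ring

lemma zeta_congr (E : Finset (Fin n)) (y w : Fin n → α4)
    (h : ∀ i : {i : Fin n // i ∈ E}, y i.1 = w i.1) (A : (Fin n → α4) → ℂ) :
    ∑ y', indE E y y' * A y' = ∑ y', indE E w y' * A y' := by
  refine Finset.sum_congr rfl fun y' _ => ?_
  unfold indE
  congr 1
  refine if_congr ?_ rfl rfl
  constructor
  · intro hy i; rw [← h i]; exact hy i
  · intro hw i; rw [h i]; exact hw i

lemma EPR_normSq_sum : ∑ q : α4, Complex.normSq (EPR q) = 1 := by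
  have h := EPR_sum
  have h2 : ((∑ q : α4, Complex.normSq (EPR q) : ℝ) : ℂ)
      = ∑ q : α4, (starRingEnd ℂ) (EPR q) * EPR q := by
    push_cast
    refine Finset.sum_congr rfl fun q _ => ?_
    rw [Complex.normSq_eq_conj_mul_self]
  rw [h] at h2
  exact_mod_cast h2

lemma dOut_pr (E : Finset (Fin n)) (p s : Fin n → Fin 2) :
    dOut E (fun i => (p i, s i))
      = if (∀ i : {i : Fin n // i ∉ E}, p i.1 = s i.1)
          then (((Real.sqrt 2)⁻¹ ^ (Fintype.card {i : Fin n // i ∉ E}) : ℝ) : ℂ) else 0 := by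
  unfold dOut
  split
  · rename_i h
    calc ∏ i : {i : Fin n // i ∉ E}, EPR (p i.1, s i.1)
        = ∏ _i : {i : Fin n // i ∉ E}, (((Real.sqrt 2)⁻¹ : ℝ) : ℂ) := by
          refine Finset.prod_congr rfl fun i _ => ?_
          rw [show EPR (p i.1, s i.1) = ((1 / Real.sqrt 2 : ℝ) : ℂ) by
            unfold EPR; exact if_pos (h i)]
          norm_num
      _ = _ := by rw [Finset.prod_const, Finset.card_univ]; push_cast; ring
  · rename_i h
    push_neg at h
    obtain ⟨i, hi⟩ := h
    apply Finset.prod_eq_zero (Finset.mem_univ i)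
    unfold EPR
    exact if_neg hi

lemma cs_complex {ι : Type} [Fintype ι] (f g : ι → ℂ) :
    Complex.normSq (∑ i, f i * g i)
      ≤ (∑ i, Complex.normSq (f i)) * ∑ i, Complex.normSq (g i) := by
  have h1 : ‖∑ i, f i * g i‖ ≤ ∑ i, ‖f i‖ * ‖g i‖ := by
    refine (norm_sum_le Finset.univ (fun i => f i * g i)).trans (le_of_eq ?_)
    exact Finset.sum_congr rfl fun i _ => by
      rw [norm_mul]
  calc Complex.normSq (∑ i, f i * g i) = (‖∑ i, f i * g i‖)^2 := (Complex.sq_norm _).symm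
    _ ≤ (∑ i, ‖f i‖ * ‖g i‖)^2 := by
        apply pow_le_pow_left₀ (norm_nonneg _) h1
    _ ≤ (∑ i, (‖f i‖)^2) * ∑ i, (‖g i‖)^2 :=
        Finset.sum_mul_sq_le_sq_mul_sq _ _ _
    _ = _ := by simp [Complex.sq_norm]

end Key


section F4sec
variable {n : ℕ}

noncomputable def zetaF (E : Finset (Fin n)) (z : (Fin n → α4) → ℂ) : (Fin n → α4) → ℂ :=
  fun y => ∑ y', indE E y y' * ((starRingEnd ℂ) (dOut E y') * z y')

def bp0 (E : Finset (Fin n)) : {i : Fin n // i ∉ E} → Fin 2 := fun _ => 0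

noncomputable def wF (E : Finset (Fin n)) (a cc : {i : Fin n // i ∈ E} → Fin 2) : Fin n → α4 :=
  fun i => (mg E a (bp0 E) i, mg E cc (bp0 E) i)

noncomputable def IF (E : Finset (Fin n)) (y y' : Fin n → α4) : ℝ :=
  if (∀ i : {i : Fin n // i ∈ E}, y i.1 = y' i.1) then 1 else 0

lemma wF_mem (E : Finset (Fin n)) (a cc : {i : Fin n // i ∈ E} → Fin 2)
    (i : {i : Fin n // i ∈ E}) : wF E a cc i.1 = (a i, cc i) := by
  unfold wF
  rw [mg_mem, mg_mem]

lemma indE_sq (E : Finset (Fin n)) (y y' : Fin n → α4) :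
    indE E y y' * indE E y y' = indE E y y' := by
  unfold indE; split <;> simp

lemma normSq_indE_mul (E : Finset (Fin n)) (y y' : Fin n → α4) (t : ℂ) :
    Complex.normSq (indE E y y' * t) = IF E y y' * Complex.normSq t := by
  unfold indE IF; split <;> simp

lemma IF_wF_mg (E : Finset (Fin n)) (a cc : {i : Fin n // i ∈ E} → Fin 2)
    (a' : {i : Fin n // i ∈ E} → α4) (b' : {i : Fin n // i ∉ E} → α4) :
    IF E (wF E a cc) (mg E a' b') = if a' = (fun i => (a i, cc i)) then 1 else 0 := by
  unfold IF
  refine if_congr ?_ rfl rfl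
  constructor
  · intro h
    funext i
    rw [← mg_mem E a' b' i, ← h i, wF_mem]
  · intro h i
    rw [wF_mem, mg_mem, h]

lemma IF_wF_sum (E : Finset (Fin n)) (y' : Fin n → α4) :
    ∑ a : {i : Fin n // i ∈ E} → Fin 2, ∑ cc : {i : Fin n // i ∈ E} → Fin 2,
      IF E (wF E a cc) y' = 1 := by
  have hval : ∀ a cc, IF E (wF E a cc) y'
      = if (a = fun i : {i : Fin n // i ∈ E} => (y' i.1).1)
          ∧ (cc = fun i : {i : Fin n // i ∈ E} => (y' i.1).2) then (1:ℝ) else 0 := by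
    intro a cc
    unfold IF
    refine if_congr ?_ rfl rfl
    constructor
    · intro h
      constructor
      · funext i; rw [← h i, wF_mem]
      · funext i; rw [← h i, wF_mem]
    · rintro ⟨h1, h2⟩ i
      rw [wF_mem, h1, h2]
  simp only [hval]
  rw [Finset.sum_eq_single (fun i : {i : Fin n // i ∈ E} => (y' i.1).1)]
  · rw [Finset.sum_eq_single (fun i : {i : Fin n // i ∈ E} => (y' i.1).2)]
    · simp
    · intro cc _ hcc; rw [if_neg (fun hh => hcc hh.2)]
    · intro h; exact absurd (Finset.mem_univ _) h
  · intro a _ ha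
    apply Finset.sum_eq_zero
    intro cc _
    rw [if_neg (fun hh => ha hh.1)]
  · intro h; exact absurd (Finset.mem_univ _) h

lemma dOut_weight_sum (E : Finset (Fin n)) (a cc : {i : Fin n // i ∈ E} → Fin 2) :
    ∑ y', IF E (wF E a cc) y' * Complex.normSq (dOut E y') = 1 := by
  rw [sum_split E (fun y' => IF E (wF E a cc) y' * Complex.normSq (dOut E y'))]
  have hd : ∀ (a' : {i : Fin n // i ∈ E} → α4) (b' : {i : Fin n // i ∉ E} → α4),
      Complex.normSq (dOut E (mg E a' b'))
        = ∏ i : {i : Fin n // i ∉ E}, Complex.normSq (EPR (b' i)) := by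
    intro a' b'
    unfold dOut
    rw [show (∏ i : {i : Fin n // i ∉ E}, EPR (mg E a' b' i.1))
        = ∏ i : {i : Fin n // i ∉ E}, EPR (b' i) from
      Finset.prod_congr rfl fun i _ => by rw [mg_not_mem]]
    exact map_prod Complex.normSq _ _
  have hW : ∑ b' : {i : Fin n // i ∉ E} → α4,
      (∏ i : {i : Fin n // i ∉ E}, Complex.normSq (EPR (b' i))) = 1 := by
    have h1 := Finset.prod_univ_sum (fun _ : {i : Fin n // i ∉ E} => (Finset.univ : Finset α4))
      (fun _ q => Complex.normSq (EPR q))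
    rw [Fintype.piFinset_univ] at h1
    rw [← h1]
    rw [show (∏ _i : {i : Fin n // i ∉ E}, ∑ q : α4, Complex.normSq (EPR q))
        = ∏ _i : {i : Fin n // i ∉ E}, (1:ℝ) from
      Finset.prod_congr rfl fun i _ => EPR_normSq_sum]
    simp
  calc ∑ a' : {i : Fin n // i ∈ E} → α4, ∑ b' : {i : Fin n // i ∉ E} → α4,
        IF E (wF E a cc) (mg E a' b') * Complex.normSq (dOut E (mg E a' b'))
      = ∑ a' : {i : Fin n // i ∈ E} → α4, (if a' = (fun i => (a i, cc i)) then (1:ℝ) else 0)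
          * ∑ b' : {i : Fin n // i ∉ E} → α4,
            (∏ i : {i : Fin n // i ∉ E}, Complex.normSq (EPR (b' i))) := by
        refine Finset.sum_congr rfl fun a' _ => ?_
        rw [Finset.mul_sum]
        exact Finset.sum_congr rfl fun b' _ => by rw [IF_wF_mg, hd]
    _ = 1 := by
        rw [Finset.sum_eq_single (fun i : {i : Fin n // i ∈ E} => (a i, cc i))]
        · rw [if_pos rfl, hW, one_mul]
        · intro a' _ ha'; rw [if_neg ha', zero_mul]
        · intro h; exact absurd (Finset.mem_univ _) h

lemma zeta_normSq_bound (E : Finset (Fin n)) (z : (Fin n → α4) → ℂ)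
    (a cc : {i : Fin n // i ∈ E} → Fin 2) :
    Complex.normSq (zetaF E z (wF E a cc))
      ≤ ∑ y', IF E (wF E a cc) y' * Complex.normSq (z y') := by
  have hGrep : zetaF E z (wF E a cc)
      = ∑ y', (indE E (wF E a cc) y' * (starRingEnd ℂ) (dOut E y'))
          * (indE E (wF E a cc) y' * z y') := by
    unfold zetaF
    refine Finset.sum_congr rfl fun y' _ => ?_
    rw [show (indE E (wF E a cc) y' * (starRingEnd ℂ) (dOut E y'))
          * (indE E (wF E a cc) y' * z y')
        = (indE E (wF E a cc) y' * indE E (wF E a cc) y')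
          * ((starRingEnd ℂ) (dOut E y') * z y') from by ring, indE_sq]
  rw [hGrep]
  refine (cs_complex _ _).trans (le_of_eq ?_)
  rw [show (∑ y', Complex.normSq (indE E (wF E a cc) y' * (starRingEnd ℂ) (dOut E y')))
      = ∑ y', IF E (wF E a cc) y' * Complex.normSq (dOut E y') from
    Finset.sum_congr rfl fun y' _ => by rw [normSq_indE_mul, Complex.normSq_conj]]
  rw [dOut_weight_sum, one_mul]
  exact Finset.sum_congr rfl fun y' _ => by rw [normSq_indE_mul]

end F4sec


section F4main
variable {n : ℕ}

lemma step1 (E : Finset (Fin n)) (x : (Fin n → Fin 2) → ℂ) (z : (Fin n → α4) → ℂ)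
    (hz : ∀ y, ∑ y', mker' E y y' * z y' = z y)
    (a : {i : Fin n // i ∈ E} → Fin 2) (b : {i : Fin n // i ∉ E} → Fin 2) :
    ∑ s, (starRingEnd ℂ) (x s) * z (fun i => (mg E a b i, s i))
      = (((Real.sqrt 2)⁻¹ ^ Fintype.card {i : Fin n // i ∉ E} : ℝ) : ℂ)
        * ∑ cc, (starRingEnd ℂ) (x (mg E cc b)) * zetaF E z (wF E a cc) := by
  have hzy := z_struct E z hz
  have hterm : ∀ (cc : {i : Fin n // i ∈ E} → Fin 2) (d : {i : Fin n // i ∉ E} → Fin 2),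
      z (fun i => (mg E a b i, mg E cc d i))
        = (if b = d then (((Real.sqrt 2)⁻¹ ^ Fintype.card {i : Fin n // i ∉ E} : ℝ) : ℂ) else 0) * zetaF E z (wF E a cc) := by
    intro cc d
    rw [hzy]
    congr 1
    · rw [dOut_pr]
      refine if_congr ?_ rfl rfl
      constructor
      · intro h
        funext i
        have := h i
        rwa [mg_not_mem, mg_not_mem] at this
      · intro h i
        rw [mg_not_mem, mg_not_mem, h]
    · refine Eq.trans (zeta_congr E _ (wF E a cc) (fun i => ?_) _) rfl
      show ((mg E a b i.1, mg E cc d i.1) : α4) = wF E a cc i.1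
      rw [wF_mem, mg_mem, mg_mem]
  calc ∑ s, (starRingEnd ℂ) (x s) * z (fun i => (mg E a b i, s i))
      = ∑ cc, ∑ d, (starRingEnd ℂ) (x (mg E cc d)) * z (fun i => (mg E a b i, mg E cc d i)) :=
        sum_split E (fun s => (starRingEnd ℂ) (x s) * z (fun i => (mg E a b i, s i)))
    _ = ∑ cc, (starRingEnd ℂ) (x (mg E cc b)) * ((((Real.sqrt 2)⁻¹ ^ Fintype.card {i : Fin n // i ∉ E} : ℝ) : ℂ) * zetaF E z (wF E a cc)) := by
        refine Finset.sum_congr rfl fun cc _ => ?_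
        rw [Finset.sum_eq_single b]
        · rw [hterm, if_pos rfl]
        · intro d _ hd
          rw [hterm, if_neg (fun h => hd h.symm), zero_mul, mul_zero]
        · intro h; exact absurd (Finset.mem_univ b) h
    _ = (((Real.sqrt 2)⁻¹ ^ Fintype.card {i : Fin n // i ∉ E} : ℝ) : ℂ) * ∑ cc, (starRingEnd ℂ) (x (mg E cc b)) * zetaF E z (wF E a cc) := by
        rw [Finset.mul_sum]
        exact Finset.sum_congr rfl fun cc _ => by ring

lemma F4 (E : Finset (Fin n)) (x : (Fin n → Fin 2) → ℂ) (z : (Fin n → α4) → ℂ)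
    (hz : ∀ y, ∑ y', mker' E y y' * z y' = z y) :
    ∑ p : Fin n → Fin 2, Complex.normSq (∑ s, (starRingEnd ℂ) (x s) * z (fun i => (p i, s i)))
      ≤ (2:ℝ)⁻¹ ^ (Fintype.card {i : Fin n // i ∉ E})
        * (∑ s, Complex.normSq (x s)) * ∑ y, Complex.normSq (z y) := by
  have hcc : ((Real.sqrt 2)⁻¹ ^ Fintype.card {i : Fin n // i ∉ E}) * ((Real.sqrt 2)⁻¹ ^ Fintype.card {i : Fin n // i ∉ E}) = (2:ℝ)⁻¹ ^ (Fintype.card {i : Fin n // i ∉ E}) := by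
    rw [← mul_pow, ← mul_inv, Real.mul_self_sqrt (by norm_num)]
  have hxnn : (0:ℝ) ≤ (∑ s, Complex.normSq (x s)) := Finset.sum_nonneg fun s _ => Complex.normSq_nonneg _
  calc ∑ p : Fin n → Fin 2, Complex.normSq (∑ s, (starRingEnd ℂ) (x s) * z (fun i => (p i, s i)))
      = ∑ a, ∑ b, Complex.normSq (∑ s, (starRingEnd ℂ) (x s) * z (fun i => (mg E a b i, s i))) :=
        sum_split E _
    _ = ∑ a, ∑ b, (((Real.sqrt 2)⁻¹ ^ Fintype.card {i : Fin n // i ∉ E}) * ((Real.sqrt 2)⁻¹ ^ Fintype.card {i : Fin n // i ∉ E}))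
          * Complex.normSq (∑ cc, (starRingEnd ℂ) (x (mg E cc b)) * zetaF E z (wF E a cc)) := by
        refine Finset.sum_congr rfl fun a _ => Finset.sum_congr rfl fun b _ => ?_
        rw [step1 E x z hz a b, Complex.normSq_mul, Complex.normSq_ofReal]
    _ ≤ ∑ a, ∑ b, (((Real.sqrt 2)⁻¹ ^ Fintype.card {i : Fin n // i ∉ E}) * ((Real.sqrt 2)⁻¹ ^ Fintype.card {i : Fin n // i ∉ E}))
          * ((∑ cc, Complex.normSq (x (mg E cc b))) * (∑ cc, Complex.normSq (zetaF E z (wF E a cc)))) := by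
        refine Finset.sum_le_sum fun a _ => Finset.sum_le_sum fun b _ => ?_
        apply mul_le_mul_of_nonneg_left _ (mul_self_nonneg _)
        refine (cs_complex _ _).trans (le_of_eq ?_)
        congr 1
        exact Finset.sum_congr rfl fun cc _ => Complex.normSq_conj _
    _ = (((Real.sqrt 2)⁻¹ ^ Fintype.card {i : Fin n // i ∉ E}) * ((Real.sqrt 2)⁻¹ ^ Fintype.card {i : Fin n // i ∉ E})) * (((∑ s, Complex.normSq (x s))) * (∑ a, ∑ cc, Complex.normSq (zetaF E z (wF E a cc)))) := by
        have hx : ∑ b : {i : Fin n // i ∉ E} → Fin 2, ∑ cc, Complex.normSq (x (mg E cc b))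
            = (∑ s, Complex.normSq (x s)) := by
          rw [sum_split E (fun s => Complex.normSq (x s))]
          exact Finset.sum_comm
        calc ∑ a, ∑ b, (((Real.sqrt 2)⁻¹ ^ Fintype.card {i : Fin n // i ∉ E}) * ((Real.sqrt 2)⁻¹ ^ Fintype.card {i : Fin n // i ∉ E}))
              * ((∑ cc, Complex.normSq (x (mg E cc b))) * (∑ cc, Complex.normSq (zetaF E z (wF E a cc))))
            = ∑ a, (∑ b, ∑ cc, Complex.normSq (x (mg E cc b)))
                * ((((Real.sqrt 2)⁻¹ ^ Fintype.card {i : Fin n // i ∉ E}) * ((Real.sqrt 2)⁻¹ ^ Fintype.card {i : Fin n // i ∉ E})) * (∑ cc, Complex.normSq (zetaF E z (wF E a cc)))) := by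
              refine Finset.sum_congr rfl fun a _ => ?_
              rw [Finset.sum_mul]
              exact Finset.sum_congr rfl fun b _ => by ring
          _ = ∑ a, ((∑ s, Complex.normSq (x s))) * ((((Real.sqrt 2)⁻¹ ^ Fintype.card {i : Fin n // i ∉ E}) * ((Real.sqrt 2)⁻¹ ^ Fintype.card {i : Fin n // i ∉ E})) * (∑ cc, Complex.normSq (zetaF E z (wF E a cc)))) := by
              refine Finset.sum_congr rfl fun a _ => ?_
              rw [hx]
          _ = (((Real.sqrt 2)⁻¹ ^ Fintype.card {i : Fin n // i ∉ E}) * ((Real.sqrt 2)⁻¹ ^ Fintype.card {i : Fin n // i ∉ E})) * (((∑ s, Complex.normSq (x s))) * (∑ a, ∑ cc, Complex.normSq (zetaF E z (wF E a cc)))) := by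
              rw [← Finset.mul_sum, ← Finset.mul_sum]
              ring
    _ ≤ (((Real.sqrt 2)⁻¹ ^ Fintype.card {i : Fin n // i ∉ E}) * ((Real.sqrt 2)⁻¹ ^ Fintype.card {i : Fin n // i ∉ E})) * (((∑ s, Complex.normSq (x s))) * ∑ y, Complex.normSq (z y)) := by
        apply mul_le_mul_of_nonneg_left _ (mul_self_nonneg _)
        apply mul_le_mul_of_nonneg_left _ hxnn
        calc ∑ a, ∑ cc, Complex.normSq (zetaF E z (wF E a cc))
            ≤ ∑ a : {i : Fin n // i ∈ E} → Fin 2, ∑ cc : {i : Fin n // i ∈ E} → Fin 2,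
                ∑ y', IF E (wF E a cc) y' * Complex.normSq (z y') :=
              Finset.sum_le_sum fun a _ => Finset.sum_le_sum fun cc _ => zeta_normSq_bound E z a cc
          _ = ∑ y', ∑ a : {i : Fin n // i ∈ E} → Fin 2, ∑ cc : {i : Fin n // i ∈ E} → Fin 2,
                IF E (wF E a cc) y' * Complex.normSq (z y') := by
              rw [show (∑ a : {i : Fin n // i ∈ E} → Fin 2, ∑ cc : {i : Fin n // i ∈ E} → Fin 2,
                  ∑ y', IF E (wF E a cc) y' * Complex.normSq (z y'))
                  = ∑ a : {i : Fin n // i ∈ E} → Fin 2, ∑ y',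
                      ∑ cc : {i : Fin n // i ∈ E} → Fin 2,
                      IF E (wF E a cc) y' * Complex.normSq (z y') from
                Finset.sum_congr rfl fun a _ => Finset.sum_comm]
              exact Finset.sum_comm
          _ = ∑ y', Complex.normSq (z y') := by
              refine Finset.sum_congr rfl fun y' _ => ?_
              rw [show (∑ a : {i : Fin n // i ∈ E} → Fin 2, ∑ cc : {i : Fin n // i ∈ E} → Fin 2,
                  IF E (wF E a cc) y' * Complex.normSq (z y'))
                  = (∑ a : {i : Fin n // i ∈ E} → Fin 2, ∑ cc : {i : Fin n // i ∈ E} → Fin 2,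
                    IF E (wF E a cc) y') * Complex.normSq (z y') from by
                rw [Finset.sum_mul]
                exact Finset.sum_congr rfl fun a _ => by rw [Finset.sum_mul]]
              rw [IF_wF_sum, one_mul]
    _ = (2:ℝ)⁻¹ ^ (Fintype.card {i : Fin n // i ∉ E})
          * ((∑ s, Complex.normSq (x s))) * ∑ y, Complex.normSq (z y) := by
        rw [← hcc]; ring

end F4main


section Assemble
variable {n : ℕ}

/-- weighted Cauchy-Schwarz -/
lemma wcs {ι : Type} (s : Finset ι) (w : ι → ℝ) (hw : ∀ i ∈ s, 0 < w i) (f : ι → ℂ) :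
    Complex.normSq (∑ i ∈ s, f i)
      ≤ (∑ i ∈ s, w i) * ∑ i ∈ s, Complex.normSq (f i) / w i := by
  have h1 : ‖∑ i ∈ s, f i‖
      ≤ ∑ i ∈ s, Real.sqrt (w i) * (‖f i‖ / Real.sqrt (w i)) := by
    refine (norm_sum_le s f).trans (le_of_eq (Finset.sum_congr rfl fun i hi => ?_))
    rw [mul_comm, div_mul_cancel₀ _ (Real.sqrt_ne_zero'.mpr (hw i hi))]
  calc Complex.normSq (∑ i ∈ s, f i) = (‖∑ i ∈ s, f i‖)^2 := (Complex.sq_norm _).symm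
    _ ≤ (∑ i ∈ s, Real.sqrt (w i) * (‖f i‖ / Real.sqrt (w i)))^2 := by
        apply pow_le_pow_left₀ (norm_nonneg _) h1
    _ ≤ (∑ i ∈ s, (Real.sqrt (w i))^2) * ∑ i ∈ s, (‖f i‖ / Real.sqrt (w i))^2 :=
        Finset.sum_mul_sq_le_sq_mul_sq _ _ _
    _ = (∑ i ∈ s, w i) * ∑ i ∈ s, Complex.normSq (f i) / w i := by
        congr 1
        · exact Finset.sum_congr rfl fun i hi => Real.sq_sqrt (hw i hi).le
        · refine Finset.sum_congr rfl fun i hi => ?_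
          rw [div_pow, Complex.sq_norm, Real.sq_sqrt (hw i hi).le]

lemma sigE_fix {R : Type} (σ : R × (Fin n → α4) → ℂ) (E : Finset (Fin n)) (ρ : R)
    (y : Fin n → α4) :
    ∑ y', mker' E y y' * sigE σ E ρ y' = sigE σ E ρ y := by
  calc ∑ y', mker' E y y' * sigE σ E ρ y'
      = ∑ y', ∑ y'', (mker' E y y' * mker E y' y'') * σ (ρ, y'') := by
        refine Finset.sum_congr rfl fun y' _ => ?_
        unfold sigE
        rw [Finset.mul_sum]
        exact Finset.sum_congr rfl fun y'' _ => by ring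
    _ = ∑ y'', (∑ y', mker' E y y' * mker E y' y'') * σ (ρ, y'') := by
        rw [Finset.sum_comm]
        exact Finset.sum_congr rfl fun y'' _ => by rw [Finset.sum_mul]
    _ = ∑ y'', mker E y y'' * σ (ρ, y'') := by
        refine Finset.sum_congr rfl fun y'' _ => ?_
        rw [mker'_mul]
    _ = sigE σ E ρ y := rfl

lemma w_eq (E : Finset (Fin n)) :
    (2:ℝ)⁻¹ ^ (Fintype.card {i : Fin n // i ∉ E}) = 2 ^ E.card / 2 ^ n := by
  have hcard : Fintype.card {i : Fin n // i ∉ E} = n - E.card := by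
    simp [Fintype.card_subtype_compl]
  have hle : E.card ≤ n := by
    simpa using Finset.card_le_univ E
  rw [hcard, inv_pow, inv_eq_one_div, div_eq_div_iff (by positivity) (by positivity),
    one_mul, ← pow_add]
  congr 1
  omega

lemma rearrange {R : Type} [Fintype R] {r : ℕ} (W : ℝ) (w : Finset (Fin n) → ℝ)
    (N : Finset (Fin n) → R → (Fin n → Fin 2) → ℝ) :
    ∑ ρ : R, ∑ p : Fin n → Fin 2, (W * ∑ E ∈ ball n r, N E ρ p / w E)
      = W * ∑ E ∈ ball n r, (∑ ρ : R, ∑ p : Fin n → Fin 2, N E ρ p) / w E := by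
  calc ∑ ρ : R, ∑ p : Fin n → Fin 2, (W * ∑ E ∈ ball n r, N E ρ p / w E)
      = W * ∑ ρ : R, ∑ p : Fin n → Fin 2, ∑ E ∈ ball n r, N E ρ p / w E := by
        rw [Finset.mul_sum]
        exact Finset.sum_congr rfl fun ρ _ => by rw [Finset.mul_sum]
    _ = W * ∑ E ∈ ball n r, ∑ ρ : R, ∑ p : Fin n → Fin 2, N E ρ p / w E := by
        congr 1
        rw [show (∑ ρ : R, ∑ p : Fin n → Fin 2, ∑ E ∈ ball n r, N E ρ p / w E)
            = ∑ ρ : R, ∑ E ∈ ball n r, ∑ p : Fin n → Fin 2, N E ρ p / w E from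
          Finset.sum_congr rfl fun ρ _ => Finset.sum_comm]
        exact Finset.sum_comm
    _ = W * ∑ E ∈ ball n r, (∑ ρ : R, ∑ p : Fin n → Fin 2, N E ρ p) / w E := by
        congr 1
        refine Finset.sum_congr rfl fun E _ => ?_
        rw [Finset.sum_div]
        exact Finset.sum_congr rfl fun ρ _ => by rw [Finset.sum_div]

lemma main_bound {R : Type} [Fintype R] {r : ℕ} (σ : R × (Fin n → α4) → ℂ)
    (hproj : ∀ (ρ : R) (x : Fin n → α4),
      ∑ y, hammProj n r EPR x y * σ (ρ, y) = σ (ρ, x))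
    (x : (Fin n → Fin 2) → ℂ) :
    ∑ ρ : R, ∑ p : Fin n → Fin 2,
        Complex.normSq (∑ s, (starRingEnd ℂ) (x s) * σ (ρ, fun i => (p i, s i)))
      ≤ (∑ E ∈ ball n r, (2:ℝ)⁻¹ ^ (Fintype.card {i : Fin n // i ∉ E}))
        * (∑ s, Complex.normSq (x s)) * ∑ ρ : R, ∑ y, Complex.normSq (σ (ρ, y)) := by
  classical
  have hXnn : 0 ≤ ∑ s, Complex.normSq (x s) :=
    Finset.sum_nonneg fun _ _ => Complex.normSq_nonneg _
  have hwpos : ∀ E : Finset (Fin n), 0 < (2:ℝ)⁻¹ ^ (Fintype.card {i : Fin n // i ∉ E}) :=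
    fun E => pow_pos (by norm_num) _
  have hWnn : 0 ≤ ∑ E ∈ ball n r, (2:ℝ)⁻¹ ^ (Fintype.card {i : Fin n // i ∉ E}) :=
    Finset.sum_nonneg fun E _ => (hwpos E).le
  have hv : ∀ (ρ : R) (p : Fin n → Fin 2),
      (∑ s, (starRingEnd ℂ) (x s) * σ (ρ, fun i => (p i, s i)))
        = ∑ E ∈ ball n r, ∑ s, (starRingEnd ℂ) (x s) * sigE σ E ρ (fun i => (p i, s i)) := by
    intro ρ p
    rw [Finset.sum_comm]
    refine Finset.sum_congr rfl fun s _ => ?_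
    rw [← sigE_sum hproj ρ (fun i => (p i, s i)), Finset.mul_sum]
  calc ∑ ρ : R, ∑ p : Fin n → Fin 2,
        Complex.normSq (∑ s, (starRingEnd ℂ) (x s) * σ (ρ, fun i => (p i, s i)))
      ≤ ∑ ρ : R, ∑ p : Fin n → Fin 2,
          ((∑ E ∈ ball n r, (2:ℝ)⁻¹ ^ (Fintype.card {i : Fin n // i ∉ E}))
            * ∑ E ∈ ball n r, Complex.normSq (∑ s, (starRingEnd ℂ) (x s) * sigE σ E ρ (fun i => (p i, s i))) / (2:ℝ)⁻¹ ^ (Fintype.card {i : Fin n // i ∉ E})) := by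
        refine Finset.sum_le_sum fun ρ _ => Finset.sum_le_sum fun p _ => ?_
        rw [hv ρ p]
        exact wcs _ _ (fun E _ => hwpos E) _
    _ = (∑ E ∈ ball n r, (2:ℝ)⁻¹ ^ (Fintype.card {i : Fin n // i ∉ E}))
          * ∑ E ∈ ball n r, (∑ ρ : R, ∑ p : Fin n → Fin 2, Complex.normSq (∑ s, (starRingEnd ℂ) (x s) * sigE σ E ρ (fun i => (p i, s i))))
            / (2:ℝ)⁻¹ ^ (Fintype.card {i : Fin n // i ∉ E}) :=
        rearrange _ _ _
    _ ≤ (∑ E ∈ ball n r, (2:ℝ)⁻¹ ^ (Fintype.card {i : Fin n // i ∉ E}))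
          * ∑ E ∈ ball n r, ((∑ s, Complex.normSq (x s))
            * ∑ ρ : R, ∑ y, Complex.normSq (sigE σ E ρ y)) := by
        apply mul_le_mul_of_nonneg_left _ hWnn
        refine Finset.sum_le_sum fun E _ => ?_
        rw [div_le_iff₀ (hwpos E)]
        calc ∑ ρ : R, ∑ p : Fin n → Fin 2, Complex.normSq (∑ s, (starRingEnd ℂ) (x s) * sigE σ E ρ (fun i => (p i, s i)))
            ≤ ∑ ρ : R, ((2:ℝ)⁻¹ ^ (Fintype.card {i : Fin n // i ∉ E})
                * (∑ s, Complex.normSq (x s)) * ∑ y, Complex.normSq (sigE σ E ρ y)) :=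
              Finset.sum_le_sum fun ρ _ => F4 E x (sigE σ E ρ) (sigE_fix σ E ρ)
          _ = (∑ s, Complex.normSq (x s)) * (∑ ρ : R, ∑ y, Complex.normSq (sigE σ E ρ y))
                * (2:ℝ)⁻¹ ^ (Fintype.card {i : Fin n // i ∉ E}) := by
              rw [← Finset.mul_sum]
              ring
    _ = (∑ E ∈ ball n r, (2:ℝ)⁻¹ ^ (Fintype.card {i : Fin n // i ∉ E}))
          * (∑ s, Complex.normSq (x s)) * ∑ ρ : R, ∑ y, Complex.normSq (σ (ρ, y)) := by
        rw [show (∑ E ∈ ball n r, ((∑ s, Complex.normSq (x s))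
              * ∑ ρ : R, ∑ y, Complex.normSq (sigE σ E ρ y)))
            = (∑ s, Complex.normSq (x s))
              * ∑ E ∈ ball n r, ∑ ρ : R, ∑ y, Complex.normSq (sigE σ E ρ y) from
          (Finset.mul_sum _ _ _).symm]
        rw [show (∑ E ∈ ball n r, ∑ ρ : R, ∑ y, Complex.normSq (sigE σ E ρ y))
            = ∑ ρ : R, ∑ E ∈ ball n r, ∑ y, Complex.normSq (sigE σ E ρ y) from Finset.sum_comm]
        rw [show (∑ ρ : R, ∑ E ∈ ball n r, ∑ y, Complex.normSq (sigE σ E ρ y))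
            = ∑ ρ : R, ∑ y, Complex.normSq (σ (ρ, y)) from
          Finset.sum_congr rfl fun ρ _ => sigE_normSq_sum hproj ρ]
        ring

end Assemble

lemma swap4 {R : Type} [Fintype R] {n : ℕ}
    (F : (Fin n → Fin 2) → (Fin n → Fin 2) → R → (Fin n → Fin 2) → ℂ) :
    ∑ s, ∑ s', ∑ ρ : R, ∑ p, F s s' ρ p = ∑ ρ : R, ∑ p, ∑ s, ∑ s', F s s' ρ p := by
  calc ∑ s, ∑ s', ∑ ρ : R, ∑ p, F s s' ρ p
      = ∑ s, ∑ ρ : R, ∑ s', ∑ p, F s s' ρ p :=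
        Finset.sum_congr rfl fun s _ => Finset.sum_comm
    _ = ∑ ρ : R, ∑ s, ∑ s', ∑ p, F s s' ρ p := Finset.sum_comm
    _ = ∑ ρ : R, ∑ s, ∑ p, ∑ s', F s s' ρ p :=
        Finset.sum_congr rfl fun ρ _ => Finset.sum_congr rfl fun s _ => Finset.sum_comm
    _ = ∑ ρ : R, ∑ p, ∑ s, ∑ s', F s s' ρ p :=
        Finset.sum_congr rfl fun ρ _ => Finset.sum_comm

lemma dot_self {n : ℕ} (x : (Fin n → Fin 2) → ℂ) :
    star x ⬝ᵥ x = ((∑ s, Complex.normSq (x s) : ℝ) : ℂ) := by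
  rw [Complex.ofReal_sum]
  simp only [dotProduct, Pi.star_apply, Complex.star_def]
  exact Finset.sum_congr rfl fun s _ => Complex.normSq_eq_conj_mul_self.symm

set_option maxHeartbeats 1000000 in
lemma quad_eq {R : Type} [Fintype R] {n : ℕ} (σ : R × (Fin n → α4) → ℂ)
    (x : (Fin n → Fin 2) → ℂ) :
    star x ⬝ᵥ (redS σ *ᵥ x)
      = ((∑ ρ : R, ∑ p : Fin n → Fin 2,
          Complex.normSq (∑ s, (starRingEnd ℂ) (x s) * σ (ρ, fun i => (p i, s i))) : ℝ) : ℂ) := by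
  calc star x ⬝ᵥ (redS σ *ᵥ x)
      = ∑ s, ∑ s', star (x s) * (redS σ s s' * x s') := by
        simp only [dotProduct, Matrix.mulVec, Pi.star_apply]
        exact Finset.sum_congr rfl fun s _ => by rw [Finset.mul_sum]
    _ = ∑ s, ∑ s', ∑ ρ : R, ∑ p : Fin n → Fin 2, star (x s)
          * ((σ (ρ, fun i => (p i, s i)) * (starRingEnd ℂ) (σ (ρ, fun i => (p i, s' i)))) * x s') := by
        refine Finset.sum_congr rfl fun s _ => Finset.sum_congr rfl fun s' _ => ?_
        rw [show redS σ s s' = ∑ ρ : R, ∑ p : Fin n → Fin 2, σ (ρ, fun i => (p i, s i))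
            * (starRingEnd ℂ) (σ (ρ, fun i => (p i, s' i))) from rfl]
        rw [Finset.sum_mul, Finset.mul_sum]
        refine Finset.sum_congr rfl fun ρ _ => ?_
        rw [Finset.sum_mul, Finset.mul_sum]
    _ = ∑ ρ : R, ∑ p : Fin n → Fin 2, ∑ s, ∑ s', star (x s)
          * ((σ (ρ, fun i => (p i, s i)) * (starRingEnd ℂ) (σ (ρ, fun i => (p i, s' i)))) * x s') :=
        swap4 (fun s s' ρ p => star (x s)
          * ((σ (ρ, fun i => (p i, s i)) * (starRingEnd ℂ) (σ (ρ, fun i => (p i, s' i)))) * x s'))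
    _ = ∑ ρ : R, ∑ p : Fin n → Fin 2, (∑ s, (starRingEnd ℂ) (x s) * σ (ρ, fun i => (p i, s i)))
          * (∑ s', x s' * (starRingEnd ℂ) (σ (ρ, fun i => (p i, s' i)))) := by
        refine Finset.sum_congr rfl fun ρ _ => Finset.sum_congr rfl fun p _ => ?_
        rw [Finset.sum_mul_sum]
        refine Finset.sum_congr rfl fun s _ => Finset.sum_congr rfl fun s' _ => ?_
        simp only [Complex.star_def]
        ring
    _ = _ := by
        rw [Complex.ofReal_sum]
        refine Finset.sum_congr rfl fun ρ _ => ?_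
        rw [Complex.ofReal_sum]
        refine Finset.sum_congr rfl fun p _ => ?_
        rw [show (∑ s', x s' * (starRingEnd ℂ) (σ (ρ, fun i => (p i, s' i))))
            = (starRingEnd ℂ) (∑ s, (starRingEnd ℂ) (x s) * σ (ρ, fun i => (p i, s i))) from by
          rw [map_sum]
          refine Finset.sum_congr rfl fun s' _ => ?_
          rw [_root_.map_mul, Complex.conj_conj]]
        exact Complex.mul_conj _

end Stmt6Aux

open Stmt6Aux in
/-- a unit vector supported in the Hamming ball of radius `⌊εn⌋`
around `(Φ⁺)^{⊗n}` has reduced state on `S` bounded by `2^{−(1−ε−h(ε))n}·1`. -/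
theorem stmt6 (ε : ℝ) (hε0 : 0 < ε) (hε1 : ε ≤ 1 / 2) (n : ℕ) (hn : 1 ≤ n)
    (R : Type) [Fintype R]
    (σ : R × (Fin n → Fin 2 × Fin 2) → ℂ)
    (hunit : ∑ z, Complex.normSq (σ z) = 1)
    (hproj : ∀ (ρ : R) (x : Fin n → Fin 2 × Fin 2),
      ∑ y, hammProj n ⌊ε * n⌋₊ EPR x y * σ (ρ, y) = σ (ρ, x)) :
    (((2 : ℝ) ^ (-(1 - ε - binEnt ε) * (n : ℝ))) •
        (1 : Matrix (Fin n → Fin 2) (Fin n → Fin 2) ℂ) - redS σ).PosSemidef := by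
  classical
  have hσnorm : ∑ ρ : R, ∑ y, Complex.normSq (σ (ρ, y)) = 1 :=
    (Fintype.sum_prod_type _).symm.trans hunit
  have hWsum : ∑ E ∈ ball n ⌊ε * (n:ℝ)⌋₊, (2:ℝ)⁻¹ ^ (Fintype.card {i : Fin n // i ∉ E})
      ≤ (2:ℝ) ^ (-(1 - ε - binEnt ε) * (n : ℝ)) := by
    rw [show (∑ E ∈ ball n ⌊ε * (n:ℝ)⌋₊, (2:ℝ)⁻¹ ^ (Fintype.card {i : Fin n // i ∉ E}))
        = ∑ E ∈ ball n ⌊ε * (n:ℝ)⌋₊, ((2:ℝ) ^ E.card / 2 ^ n) from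
      Finset.sum_congr rfl fun E _ => w_eq E]
    exact weight_bound ε hε0 hε1 n
  rw [Matrix.posSemidef_iff_dotProduct_mulVec]
  constructor
  · -- Hermitian part
    have h1 : (((2 : ℝ) ^ (-(1 - ε - binEnt ε) * (n : ℝ))) •
        (1 : Matrix (Fin n → Fin 2) (Fin n → Fin 2) ℂ)).IsHermitian := by
      unfold Matrix.IsHermitian
      ext a b
      rw [Matrix.conjTranspose_apply, Matrix.smul_apply, Matrix.smul_apply, star_smul,
        star_trivial, Matrix.one_apply]
      by_cases h : b = a
      · subst h; simp
      · rw [if_neg h, Matrix.one_apply, if_neg (fun hh => h hh.symm)]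
        simp
    have h2 : (redS σ).IsHermitian := by
      unfold Matrix.IsHermitian
      ext s s'
      rw [Matrix.conjTranspose_apply]
      show star (redS σ s' s) = redS σ s s'
      rw [Complex.star_def]
      rw [show redS σ s' s = ∑ ρ : R, ∑ p : Fin n → Fin 2, σ (ρ, fun i => (p i, s' i))
          * (starRingEnd ℂ) (σ (ρ, fun i => (p i, s i))) from rfl]
      rw [show redS σ s s' = ∑ ρ : R, ∑ p : Fin n → Fin 2, σ (ρ, fun i => (p i, s i))
          * (starRingEnd ℂ) (σ (ρ, fun i => (p i, s' i))) from rfl]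
      rw [map_sum]
      refine Finset.sum_congr rfl fun ρ _ => ?_
      rw [map_sum]
      refine Finset.sum_congr rfl fun p _ => ?_
      rw [_root_.map_mul, Complex.conj_conj]
      ring
    exact h1.sub h2
  · intro x
    have hXnn : 0 ≤ ∑ s, Complex.normSq (x s) :=
      Finset.sum_nonneg fun _ _ => Complex.normSq_nonneg _
    have key := main_bound σ hproj x
    rw [hσnorm, mul_one] at key
    have key2 : ∑ ρ : R, ∑ p : Fin n → Fin 2,
        Complex.normSq (∑ s, (starRingEnd ℂ) (x s) * σ (ρ, fun i => (p i, s i)))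
        ≤ (2:ℝ) ^ (-(1 - ε - binEnt ε) * (n : ℝ)) * ∑ s, Complex.normSq (x s) :=
      key.trans (mul_le_mul_of_nonneg_right hWsum hXnn)
    rw [Matrix.sub_mulVec, dotProduct_sub, smul_mulVec, Matrix.one_mulVec,
      dotProduct_smul, dot_self, quad_eq σ x, Complex.real_smul, ← Complex.ofReal_mul,
      ← Complex.ofReal_sub]
    exact Complex.zero_le_real.mpr (by linarith)
end

section
/- Let n ≥ 1, let R be a finite type, let E ⊆ Fin n, and define the matrix M_E = ⊗_i M_i indexed by (Fin n → Fin 2 × Fin 2), where M_i = 1 − Φ⁺(Φ⁺)† for i ∈ E and M_i = Φ⁺(Φ⁺)† for i ∉ E. If a vector ψ : R × (Fin n → Fin 2 × Fin 2) → ℂ satisfies (1_R ⊗ M_E)·ψ = ψ, then its reduced matrix ψ_S on the S-components satisfies ψ_S ≤ 2^{−(n−|E|)} · ‖ψ‖² · 1, i.e., 2^{−(n−|E|)}‖ψ‖²·1 − ψ_S is positive semidefinite. -/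
open Matrix ComplexOrder

/-- For `E ⊆ Fin n`, the tensor product matrix with `1 − Φ⁺(Φ⁺)†` on positions in
`E` and `Φ⁺(Φ⁺)†` outside. -/
noncomputable def matE (n : ℕ) (E : Finset (Fin n)) :
    Matrix (Fin n → Fin 2 × Fin 2) (Fin n → Fin 2 × Fin 2) ℂ :=
  Matrix.of fun x y =>
    ∏ i, (if i ∈ E then (1 - outer EPR) else outer EPR) (x i) (y i)

lemma outer_EPR_apply (a b : Fin 2 × Fin 2) :
    outer EPR a b = if a.1 = a.2 ∧ b.1 = b.2 then (1/2 : ℂ) else 0 := by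
  simp only [outer, EPR, Matrix.vecMulVec_apply, Pi.star_apply]
  by_cases h1 : a.1 = a.2 <;> by_cases h2 : b.1 = b.2 <;> simp [h1, h2]
  have : (Real.sqrt 2)⁻¹ * (Real.sqrt 2)⁻¹ = 2⁻¹ := by
    rw [← mul_inv, Real.mul_self_sqrt (by norm_num : (0:ℝ) ≤ 2)]
  rw [← Complex.ofReal_inv, ← Complex.ofReal_mul, this]; norm_num

lemma conj_outer_EPR (a b : Fin 2 × Fin 2) :
    (starRingEnd ℂ) (outer EPR a b) = outer EPR b a := by
  simp [outer_EPR_apply, apply_ite (starRingEnd ℂ), and_comm, map_ofNat]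

lemma outer_EPR_mul (a b : Fin 2 × Fin 2) :
    ∑ c, outer EPR a c * outer EPR c b = outer EPR a b := by
  simp only [outer_EPR_apply]
  rw [Fintype.sum_prod_type]
  simp [Fin.sum_univ_two]
  by_cases h1 : a.1 = a.2 <;> by_cases h2 : b.1 = b.2 <;> simp [h1, h2] <;> norm_num

noncomputable def matE' (n : ℕ) (E : Finset (Fin n)) :
    Matrix (Fin n → Fin 2 × Fin 2) (Fin n → Fin 2 × Fin 2) ℂ :=
  Matrix.of fun x y =>
    ∏ i, (if i ∈ E then (1 : Matrix (Fin 2 × Fin 2) (Fin 2 × Fin 2) ℂ) else outer EPR) (x i) (y i)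

lemma conj_matE' {n : ℕ} (E : Finset (Fin n)) (x y : Fin n → Fin 2 × Fin 2) :
    (starRingEnd ℂ) (matE' n E y x) = matE' n E x y := by
  simp only [matE', Matrix.of_apply, map_prod]
  refine Finset.prod_congr rfl fun i _ => ?_
  by_cases hi : i ∈ E
  · simp [hi, Matrix.one_apply, apply_ite (starRingEnd ℂ), eq_comm]
  · simp [hi, conj_outer_EPR]

lemma matE'_mul_matE {n : ℕ} (E : Finset (Fin n)) (x z : Fin n → Fin 2 × Fin 2) :
    ∑ y, matE' n E x y * matE n E y z = matE n E x z := by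
  simp only [matE', matE, Matrix.of_apply]
  have : ∀ y : Fin n → Fin 2 × Fin 2,
      (∏ i, (if i ∈ E then (1 : Matrix (Fin 2 × Fin 2) (Fin 2 × Fin 2) ℂ) else outer EPR) (x i) (y i)) *
      (∏ i, (if i ∈ E then (1 - outer EPR) else outer EPR) (y i) (z i)) =
      ∏ i, ((if i ∈ E then (1 : Matrix (Fin 2 × Fin 2) (Fin 2 × Fin 2) ℂ) else outer EPR) (x i) (y i) *
        (if i ∈ E then (1 - outer EPR) else outer EPR) (y i) (z i)) := fun y =>
    (Finset.prod_mul_distrib).symm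
  simp only [this]
  rw [← Fintype.prod_sum (fun i c =>
    (if i ∈ E then (1 : Matrix (Fin 2 × Fin 2) (Fin 2 × Fin 2) ℂ) else outer EPR) (x i) c *
    (if i ∈ E then (1 - outer EPR) else outer EPR) c (z i))]
  refine Finset.prod_congr rfl fun i _ => ?_
  by_cases hi : i ∈ E
  · simp [hi, Matrix.one_apply]
  · simp only [hi, if_false]
    exact outer_EPR_mul _ _

lemma matE'_mul_matE' {n : ℕ} (E : Finset (Fin n)) (x z : Fin n → Fin 2 × Fin 2) :
    ∑ y, matE' n E x y * matE' n E y z = matE' n E x z := by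
  simp only [matE', Matrix.of_apply]
  have : ∀ y : Fin n → Fin 2 × Fin 2,
      (∏ i, (if i ∈ E then (1 : Matrix (Fin 2 × Fin 2) (Fin 2 × Fin 2) ℂ) else outer EPR) (x i) (y i)) *
      (∏ i, (if i ∈ E then (1 : Matrix (Fin 2 × Fin 2) (Fin 2 × Fin 2) ℂ) else outer EPR) (y i) (z i)) =
      ∏ i, ((if i ∈ E then (1 : Matrix (Fin 2 × Fin 2) (Fin 2 × Fin 2) ℂ) else outer EPR) (x i) (y i) *
        (if i ∈ E then (1 : Matrix (Fin 2 × Fin 2) (Fin 2 × Fin 2) ℂ) else outer EPR) (y i) (z i)) := fun y =>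
    (Finset.prod_mul_distrib).symm
  simp only [this]
  rw [← Fintype.prod_sum (fun i c =>
    (if i ∈ E then (1 : Matrix (Fin 2 × Fin 2) (Fin 2 × Fin 2) ℂ) else outer EPR) (x i) c *
    (if i ∈ E then (1 : Matrix (Fin 2 × Fin 2) (Fin 2 × Fin 2) ℂ) else outer EPR) c (z i))]
  refine Finset.prod_congr rfl fun i _ => ?_
  by_cases hi : i ∈ E
  · simp [hi, Matrix.one_apply]
  · simp only [hi, if_false]
    exact outer_EPR_mul _ _

def pr {n : ℕ} (p s : Fin n → Fin 2) : Fin n → Fin 2 × Fin 2 := fun i => (p i, s i)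

def sel {n : ℕ} (E : Finset (Fin n)) (a b : Fin n → Fin 2) : Fin n → Fin 2 :=
  fun i => if i ∈ E then a i else b i

lemma matE'_pair {n : ℕ} (E : Finset (Fin n)) (p s q s' : Fin n → Fin 2) :
    matE' n E (pr p s) (pr q s') =
      ((2:ℂ) ^ (n - E.card))⁻¹ * (if s = sel E s' p ∧ q = sel E p s' then 1 else 0) := by
  by_cases H : s = sel E s' p ∧ q = sel E p s'
  · obtain ⟨h1, h2⟩ := H
    rw [if_pos ⟨h1, h2⟩, mul_one]
    have key : ∀ i : Fin n,
        (if i ∈ E then (1 : Matrix (Fin 2 × Fin 2) (Fin 2 × Fin 2) ℂ) else outer EPR)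
          ((pr p s) i) ((pr q s') i) = if i ∈ E then (1:ℂ) else (1/2 : ℂ) := by
      intro i
      by_cases hi : i ∈ E
      · have hq : q i = p i := by rw [h2]; simp [sel, hi]
        have hs : s i = s' i := by rw [h1]; simp [sel, hi]
        simp [hi, Matrix.one_apply, pr, hq, hs]
      · have hs : s i = p i := by rw [h1]; simp [sel, hi]
        have hq : q i = s' i := by rw [h2]; simp [sel, hi]
        simp [hi, outer_EPR_apply, pr, hs, hq]
    simp only [matE', Matrix.of_apply, key]
    rw [← Finset.prod_compl_mul_prod E]
    rw [Finset.prod_congr rfl (fun i hi => if_neg (Finset.mem_compl.mp hi) :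
      ∀ i ∈ Eᶜ, (if i ∈ E then (1:ℂ) else (1/2:ℂ)) = (1/2:ℂ))]
    rw [Finset.prod_congr rfl (fun i hi => if_pos hi :
      ∀ i ∈ E, (if i ∈ E then (1:ℂ) else (1/2:ℂ)) = (1:ℂ))]
    rw [Finset.prod_const, Finset.prod_const_one, mul_one,
      Finset.card_compl, Fintype.card_fin, one_div, inv_pow]
  · rw [if_neg H, mul_zero]
    have : ∃ i : Fin n,
        (if i ∈ E then (1 : Matrix (Fin 2 × Fin 2) (Fin 2 × Fin 2) ℂ) else outer EPR)
          ((pr p s) i) ((pr q s') i) = 0 := by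
      rcases not_and_or.mp H with h | h
      · obtain ⟨i, hi⟩ := Function.ne_iff.mp h
        refine ⟨i, ?_⟩
        by_cases hE : i ∈ E
        · have : s i ≠ s' i := by simpa [sel, hE] using hi
          simp [hE, Matrix.one_apply, pr, Prod.ext_iff, this]
        · have h3 : s i ≠ p i := by simpa [sel, hE] using hi
          simp only [hE, if_false, outer_EPR_apply, pr]
          rw [if_neg]
          rintro ⟨h4, -⟩
          exact h3 h4.symm
      · obtain ⟨i, hi⟩ := Function.ne_iff.mp h
        refine ⟨i, ?_⟩
        by_cases hE : i ∈ E
        · have h3 : q i ≠ p i := by simpa [sel, hE] using hi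
          simp only [hE, if_true, Matrix.one_apply, pr]
          rw [if_neg]
          rintro h4
          exact h3 (congrArg Prod.fst h4).symm
        · have h3 : q i ≠ s' i := by simpa [sel, hE] using hi
          simp only [hE, if_false, outer_EPR_apply, pr]
          rw [if_neg]
          rintro ⟨-, h4⟩
          exact h3 h4
    obtain ⟨i, hi⟩ := this
    simp only [matE', Matrix.of_apply]
    exact Finset.prod_eq_zero (Finset.mem_univ i) hi

lemma sum_X {n : ℕ} (f : (Fin n → Fin 2 × Fin 2) → ℂ) :
    ∑ x, f x = ∑ p : Fin n → Fin 2, ∑ s : Fin n → Fin 2, f (pr p s) := by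
  calc ∑ x, f x = ∑ q : (Fin n → Fin 2) × (Fin n → Fin 2), f (pr q.1 q.2) :=
        (Fintype.sum_equiv (Equiv.arrowProdEquivProdArrow (Fin n) (fun _ => Fin 2) (fun _ => Fin 2)).symm
          (fun q => f (pr q.1 q.2)) f (fun q => rfl)).symm
    _ = ∑ p : Fin n → Fin 2, ∑ s : Fin n → Fin 2, f (pr p s) :=
        Fintype.sum_prod_type (f := fun q => f (pr q.1 q.2))

lemma cs_complex {ι : Type*} [Fintype ι] (x y : ι → ℂ) :
    Complex.normSq (∑ i, x i * y i) ≤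
      (∑ i, Complex.normSq (x i)) * (∑ i, Complex.normSq (y i)) := by
  have h1 : ‖∑ i, x i * y i‖ ≤ ∑ i, ‖x i‖ * ‖y i‖ :=
    (norm_sum_le _ _).trans_eq (by simp [norm_mul])
  have h2 := Finset.sum_mul_sq_le_sq_mul_sq Finset.univ (fun i => ‖x i‖) (fun i => ‖y i‖)
  calc Complex.normSq (∑ i, x i * y i) = ‖∑ i, x i * y i‖ ^ 2 := by
        rw [Complex.normSq_eq_norm_sq]
    _ ≤ (∑ i, ‖x i‖ * ‖y i‖) ^ 2 := by
        apply pow_le_pow_left₀ (norm_nonneg _) h1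
    _ ≤ (∑ i, ‖x i‖ ^ 2) * (∑ i, ‖y i‖ ^ 2) := h2
    _ = (∑ i, Complex.normSq (x i)) * (∑ i, Complex.normSq (y i)) := by
        congr 1 <;> exact Finset.sum_congr rfl fun i _ => by
          rw [Complex.normSq_eq_norm_sq]

def uu {n : ℕ} (φ : (Fin n → Fin 2) → ℂ) (p : Fin n → Fin 2)
    (x : Fin n → Fin 2 × Fin 2) : ℂ :=
  if (fun i => (x i).1) = p then φ (fun i => (x i).2) else 0

noncomputable def vv {n : ℕ} (E : Finset (Fin n)) (φ : (Fin n → Fin 2) → ℂ)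
    (p : Fin n → Fin 2) (y : Fin n → Fin 2 × Fin 2) : ℂ :=
  ∑ x, matE' n E y x * uu φ p x

noncomputable def hh {n : ℕ} (E : Finset (Fin n)) (φ : (Fin n → Fin 2) → ℂ)
    (w : (Fin n → Fin 2 × Fin 2) → ℂ) (p : Fin n → Fin 2) : ℂ :=
  ∑ y, (starRingEnd ℂ) (vv E φ p y) * w y

lemma uu_pair {n : ℕ} (φ : (Fin n → Fin 2) → ℂ) (p p' s : Fin n → Fin 2) :
    uu φ p (pr p' s) = if p' = p then φ s else 0 := by
  unfold uu pr
  rw [if_congr (Iff.rfl) rfl rfl]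

lemma fixw' {n : ℕ} (E : Finset (Fin n)) (w : (Fin n → Fin 2 × Fin 2) → ℂ)
    (hw : ∀ x, ∑ y, matE n E x y * w y = w x) (x : Fin n → Fin 2 × Fin 2) :
    ∑ y, matE' n E x y * w y = w x := by
  calc ∑ y, matE' n E x y * w y = ∑ y, matE' n E x y * ∑ z, matE n E y z * w z := by
        refine Finset.sum_congr rfl fun y _ => ?_
        rw [hw y]
    _ = ∑ y, ∑ z, matE' n E x y * matE n E y z * w z := by
        simp only [Finset.mul_sum, mul_assoc]
    _ = ∑ z, (∑ y, matE' n E x y * matE n E y z) * w z := by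
        rw [Finset.sum_comm]
        simp only [Finset.sum_mul]
    _ = ∑ z, matE n E x z * w z := by
        simp only [matE'_mul_matE]
    _ = w x := hw x

lemma collapse {n : ℕ} (φ : (Fin n → Fin 2) → ℂ) (p : Fin n → Fin 2)
    (g : (Fin n → Fin 2 × Fin 2) → ℂ) :
    ∑ x, (starRingEnd ℂ) (uu φ p x) * g x = ∑ s, (starRingEnd ℂ) (φ s) * g (pr p s) := by
  rw [sum_X (fun x => (starRingEnd ℂ) (uu φ p x) * g x)]
  simp only [uu_pair, apply_ite (starRingEnd ℂ), map_zero, ite_mul, zero_mul,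
    Finset.sum_ite_irrel, Finset.sum_const_zero, Finset.sum_ite_eq', Finset.mem_univ, if_true]

lemma hh_eq {n : ℕ} (E : Finset (Fin n)) (φ : (Fin n → Fin 2) → ℂ)
    (w : (Fin n → Fin 2 × Fin 2) → ℂ)
    (hw : ∀ x, ∑ y, matE n E x y * w y = w x) (p : Fin n → Fin 2) :
    hh E φ w p = ∑ s, (starRingEnd ℂ) (φ s) * w (pr p s) := by
  calc hh E φ w p
      = ∑ y, (∑ x, (starRingEnd ℂ) (uu φ p x) * (matE' n E x y * w y)) := by
        unfold hh vv
        refine Finset.sum_congr rfl fun y _ => ?_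
        rw [map_sum, Finset.sum_mul]
        refine Finset.sum_congr rfl fun x _ => ?_
        rw [_root_.map_mul, conj_matE']
        ring
    _ = ∑ x, (starRingEnd ℂ) (uu φ p x) * ∑ y, matE' n E x y * w y := by
        rw [Finset.sum_comm]
        simp only [Finset.mul_sum]
    _ = ∑ x, (starRingEnd ℂ) (uu φ p x) * w x := by
        simp only [fixw' E w hw]
    _ = ∑ s, (starRingEnd ℂ) (φ s) * w (pr p s) := collapse φ p w

lemma gram {n : ℕ} (E : Finset (Fin n)) (φ : (Fin n → Fin 2) → ℂ)
    (p q : Fin n → Fin 2) :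
    ∑ y, (starRingEnd ℂ) (vv E φ p y) * vv E φ q y =
      ∑ s, ∑ s', (starRingEnd ℂ) (φ s) * (φ s' * matE' n E (pr p s) (pr q s')) := by
  calc ∑ y, (starRingEnd ℂ) (vv E φ p y) * vv E φ q y
      = ∑ y, ∑ x, ∑ x', (starRingEnd ℂ) (uu φ p x) *
          (uu φ q x' * (matE' n E x y * matE' n E y x')) := by
        refine Finset.sum_congr rfl fun y _ => ?_
        unfold vv
        rw [map_sum, Finset.sum_mul_sum]
        refine Finset.sum_congr rfl fun x _ => ?_
        refine Finset.sum_congr rfl fun x' _ => ?_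
        rw [_root_.map_mul, conj_matE']
        ring
    _ = ∑ x, ∑ x', (starRingEnd ℂ) (uu φ p x) *
          (uu φ q x' * ∑ y, matE' n E x y * matE' n E y x') := by
        rw [Finset.sum_comm]
        refine Finset.sum_congr rfl fun x _ => ?_
        rw [Finset.sum_comm]
        refine Finset.sum_congr rfl fun x' _ => ?_
        simp only [Finset.mul_sum]
    _ = ∑ x, (starRingEnd ℂ) (uu φ p x) *
          (∑ x', uu φ q x' * matE' n E x x') := by
        simp only [matE'_mul_matE', Finset.mul_sum]
    _ = ∑ s, (starRingEnd ℂ) (φ s) *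
          (∑ x', uu φ q x' * matE' n E (pr p s) x') := by
        exact collapse φ p _
    _ = ∑ s, (starRingEnd ℂ) (φ s) *
          (∑ s', φ s' * matE' n E (pr p s) (pr q s')) := by
        refine Finset.sum_congr rfl fun s _ => ?_
        congr 1
        rw [sum_X (fun x' => uu φ q x' * matE' n E (pr p s) x')]
        simp only [uu_pair, ite_mul, zero_mul,
          Finset.sum_ite_irrel, Finset.sum_const_zero, Finset.sum_ite_eq',
          Finset.mem_univ, if_true]
    _ = ∑ s, ∑ s', (starRingEnd ℂ) (φ s) * (φ s' * matE' n E (pr p s) (pr q s')) := by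
        simp only [Finset.mul_sum]

noncomputable def zz {n : ℕ} (E : Finset (Fin n)) (φ : (Fin n → Fin 2) → ℂ)
    (w : (Fin n → Fin 2 × Fin 2) → ℂ) (y : Fin n → Fin 2 × Fin 2) : ℂ :=
  ∑ p, hh E φ w p * vv E φ p y

lemma zw_eq {n : ℕ} (E : Finset (Fin n)) (φ : (Fin n → Fin 2) → ℂ)
    (w : (Fin n → Fin 2 × Fin 2) → ℂ) :
    ∑ y, (starRingEnd ℂ) (zz E φ w y) * w y =
      ∑ p, (Complex.normSq (hh E φ w p) : ℂ) := by
  calc ∑ y, (starRingEnd ℂ) (zz E φ w y) * w y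
      = ∑ y, ∑ p, (starRingEnd ℂ) (hh E φ w p) * ((starRingEnd ℂ) (vv E φ p y) * w y) := by
        refine Finset.sum_congr rfl fun y _ => ?_
        unfold zz
        rw [map_sum, Finset.sum_mul]
        refine Finset.sum_congr rfl fun p _ => ?_
        rw [_root_.map_mul]; ring
    _ = ∑ p, (starRingEnd ℂ) (hh E φ w p) * ∑ y, (starRingEnd ℂ) (vv E φ p y) * w y := by
        rw [Finset.sum_comm]
        simp only [Finset.mul_sum]
    _ = ∑ p, (starRingEnd ℂ) (hh E φ w p) * hh E φ w p := rfl
    _ = ∑ p, (Complex.normSq (hh E φ w p) : ℂ) := by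
        refine Finset.sum_congr rfl fun p _ => ?_
        rw [mul_comm, Complex.mul_conj]

lemma S3 {n : ℕ} (E : Finset (Fin n)) (φ : (Fin n → Fin 2) → ℂ)
    (w : (Fin n → Fin 2 × Fin 2) → ℂ) :
    ∑ y, (starRingEnd ℂ) (zz E φ w y) * zz E φ w y =
      ((2:ℂ) ^ (n - E.card))⁻¹ * ∑ s' : Fin n → Fin 2, ∑ p : Fin n → Fin 2,
        ((starRingEnd ℂ) (hh E φ w p) * hh E φ w (sel E p s')) *
          ((starRingEnd ℂ) (φ (sel E s' p)) * φ s') := by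
  calc ∑ y, (starRingEnd ℂ) (zz E φ w y) * zz E φ w y
      = ∑ y, ∑ p, ∑ q, ((starRingEnd ℂ) (hh E φ w p) * hh E φ w q) *
          ((starRingEnd ℂ) (vv E φ p y) * vv E φ q y) := by
        refine Finset.sum_congr rfl fun y _ => ?_
        unfold zz
        rw [map_sum, Finset.sum_mul_sum]
        refine Finset.sum_congr rfl fun p _ => Finset.sum_congr rfl fun q _ => ?_
        rw [_root_.map_mul]; ring
    _ = ∑ p, ∑ q, ((starRingEnd ℂ) (hh E φ w p) * hh E φ w q) *
          ∑ y, (starRingEnd ℂ) (vv E φ p y) * vv E φ q y := by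
        rw [Finset.sum_comm]
        refine Finset.sum_congr rfl fun p _ => ?_
        rw [Finset.sum_comm]
        refine Finset.sum_congr rfl fun q _ => ?_
        simp only [Finset.mul_sum]
    _ = ∑ p, ∑ q, ∑ s, ∑ s', ((starRingEnd ℂ) (hh E φ w p) * hh E φ w q) *
          ((starRingEnd ℂ) (φ s) * (φ s' * matE' n E (pr p s) (pr q s'))) := by
        simp only [_root_.gram, Finset.mul_sum]
    _ = ∑ p, ∑ s, ∑ s', ∑ q, ((starRingEnd ℂ) (hh E φ w p) * hh E φ w q) *
          ((starRingEnd ℂ) (φ s) * (φ s' * matE' n E (pr p s) (pr q s'))) := by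
        refine Finset.sum_congr rfl fun p _ => ?_
        rw [Finset.sum_comm]
        exact Finset.sum_congr rfl fun s _ => Finset.sum_comm
    _ = ∑ p, ∑ s', ∑ s, ∑ q, ((starRingEnd ℂ) (hh E φ w p) * hh E φ w q) *
          ((starRingEnd ℂ) (φ s) * (φ s' * matE' n E (pr p s) (pr q s'))) := by
        exact Finset.sum_congr rfl fun p _ => Finset.sum_comm
    _ = ∑ p, ∑ s' : Fin n → Fin 2,
          ((starRingEnd ℂ) (hh E φ w p) * hh E φ w (sel E p s')) *
          ((starRingEnd ℂ) (φ (sel E s' p)) * (φ s' * ((2:ℂ) ^ (n - E.card))⁻¹)) := by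
        refine Finset.sum_congr rfl fun p _ => Finset.sum_congr rfl fun s' _ => ?_
        simp only [matE'_pair, mul_ite, mul_one, mul_zero, ite_and, ite_mul, zero_mul,
          Finset.sum_ite_irrel, Finset.sum_const_zero, Finset.sum_ite_eq',
          Finset.mem_univ, if_true]
    _ = ((2:ℂ) ^ (n - E.card))⁻¹ * ∑ s' : Fin n → Fin 2, ∑ p : Fin n → Fin 2,
          ((starRingEnd ℂ) (hh E φ w p) * hh E φ w (sel E p s')) *
          ((starRingEnd ℂ) (φ (sel E s' p)) * φ s') := by
        rw [Finset.sum_comm, Finset.mul_sum]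
        refine Finset.sum_congr rfl fun s' _ => ?_
        rw [Finset.mul_sum]
        refine Finset.sum_congr rfl fun p _ => ?_
        ring

def mg {n : ℕ} (E : Finset (Fin n)) (c : {i : Fin n // i ∈ E} → Fin 2)
    (u : {i : Fin n // ¬ i ∈ E} → Fin 2) : Fin n → Fin 2 :=
  fun i => if h : i ∈ E then c ⟨i, h⟩ else u ⟨i, h⟩

lemma sel_mg {n : ℕ} (E : Finset (Fin n)) (c t : {i : Fin n // i ∈ E} → Fin 2)
    (u u' : {i : Fin n // ¬ i ∈ E} → Fin 2) :
    sel E (mg E c u) (mg E t u') = mg E c u' := by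
  funext i
  by_cases hi : i ∈ E <;> simp [sel, mg, hi]

lemma sum_mg {M : Type*} [AddCommMonoid M] {n : ℕ} (E : Finset (Fin n))
    (f : (Fin n → Fin 2) → M) :
    ∑ p, f p = ∑ c, ∑ u, f (mg E c u) := by
  rw [← Equiv.sum_comp (Equiv.piEquivPiSubtypeProd (fun i : Fin n => i ∈ E)
    (fun _ => Fin 2)).symm f]
  exact Fintype.sum_prod_type (f := fun cu => f ((Equiv.piEquivPiSubtypeProd
    (fun i : Fin n => i ∈ E) (fun _ => Fin 2)).symm cu))

noncomputable def AA {n : ℕ} (E : Finset (Fin n)) (φ : (Fin n → Fin 2) → ℂ)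
    (w : (Fin n → Fin 2 × Fin 2) → ℂ) (c t : {i : Fin n // i ∈ E} → Fin 2) : ℂ :=
  ∑ u' : {i : Fin n // ¬ i ∈ E} → Fin 2, hh E φ w (mg E c u') * φ (mg E t u')

lemma S6 {n : ℕ} (E : Finset (Fin n)) (φ : (Fin n → Fin 2) → ℂ)
    (w : (Fin n → Fin 2 × Fin 2) → ℂ) :
    ∑ y, (starRingEnd ℂ) (zz E φ w y) * zz E φ w y =
      ((2:ℂ) ^ (n - E.card))⁻¹ * ∑ c, ∑ t, (Complex.normSq (AA E φ w c t) : ℂ) := by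
  rw [S3]
  congr 1
  calc ∑ s' : Fin n → Fin 2, ∑ p : Fin n → Fin 2,
        ((starRingEnd ℂ) (hh E φ w p) * hh E φ w (sel E p s')) *
          ((starRingEnd ℂ) (φ (sel E s' p)) * φ s')
      = ∑ t, ∑ u', ∑ p : Fin n → Fin 2,
          ((starRingEnd ℂ) (hh E φ w p) * hh E φ w (sel E p (mg E t u'))) *
          ((starRingEnd ℂ) (φ (sel E (mg E t u') p)) * φ (mg E t u')) :=
        sum_mg E _
    _ = ∑ t, ∑ u', ∑ c, ∑ u,
          ((starRingEnd ℂ) (hh E φ w (mg E c u)) * hh E φ w (sel E (mg E c u) (mg E t u'))) *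
          ((starRingEnd ℂ) (φ (sel E (mg E t u') (mg E c u))) * φ (mg E t u')) :=
        Finset.sum_congr rfl fun t _ => Finset.sum_congr rfl fun u' _ => sum_mg E _
    _ = ∑ t, ∑ u', ∑ c, ∑ u,
          ((starRingEnd ℂ) (hh E φ w (mg E c u)) * hh E φ w (mg E c u')) *
          ((starRingEnd ℂ) (φ (mg E t u)) * φ (mg E t u')) := by
        simp only [sel_mg]
    _ = ∑ t, ∑ c, ∑ u', ∑ u,
          ((starRingEnd ℂ) (hh E φ w (mg E c u)) * hh E φ w (mg E c u')) *
          ((starRingEnd ℂ) (φ (mg E t u)) * φ (mg E t u')) :=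
        Finset.sum_congr rfl fun t _ => Finset.sum_comm
    _ = ∑ c, ∑ t, ∑ u', ∑ u,
          ((starRingEnd ℂ) (hh E φ w (mg E c u)) * hh E φ w (mg E c u')) *
          ((starRingEnd ℂ) (φ (mg E t u)) * φ (mg E t u')) := Finset.sum_comm
    _ = ∑ c, ∑ t, ∑ u, ∑ u',
          ((starRingEnd ℂ) (hh E φ w (mg E c u)) * hh E φ w (mg E c u')) *
          ((starRingEnd ℂ) (φ (mg E t u)) * φ (mg E t u')) :=
        Finset.sum_congr rfl fun c _ => Finset.sum_congr rfl fun t _ => Finset.sum_comm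
    _ = ∑ c, ∑ t, (starRingEnd ℂ) (AA E φ w c t) * AA E φ w c t := by
        refine Finset.sum_congr rfl fun c _ => Finset.sum_congr rfl fun t _ => ?_
        unfold AA
        rw [map_sum, Finset.sum_mul_sum]
        refine Finset.sum_congr rfl fun u _ => Finset.sum_congr rfl fun u' _ => ?_
        rw [_root_.map_mul]; ring
    _ = ∑ c, ∑ t, (Complex.normSq (AA E φ w c t) : ℂ) := by
        refine Finset.sum_congr rfl fun c _ => Finset.sum_congr rfl fun t _ => ?_
        rw [mul_comm, Complex.mul_conj]

lemma key {n : ℕ} (E : Finset (Fin n)) (φ : (Fin n → Fin 2) → ℂ)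
    (w : (Fin n → Fin 2 × Fin 2) → ℂ)
    (hw : ∀ x, ∑ y, matE n E x y * w y = w x) :
    ∑ p : Fin n → Fin 2, Complex.normSq (∑ s, (starRingEnd ℂ) (φ s) * w (pr p s)) ≤
      ((2:ℝ) ^ (n - E.card))⁻¹ * (∑ s, Complex.normSq (φ s)) * ∑ y, Complex.normSq (w y) := by
  set Qr : ℝ := ∑ p, Complex.normSq (hh E φ w p) with hQr
  set Nφ : ℝ := ∑ s, Complex.normSq (φ s) with hNφ
  set Nw : ℝ := ∑ y, Complex.normSq (w y) with hNw
  set NzR : ℝ := ∑ y, Complex.normSq (zz E φ w y) with hNzR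
  set k : ℕ := n - E.card with hk
  have hL : ∑ p : Fin n → Fin 2,
      Complex.normSq (∑ s, (starRingEnd ℂ) (φ s) * w (pr p s)) = Qr := by
    rw [hQr]
    exact Finset.sum_congr rfl fun p _ => by rw [hh_eq E φ w hw p]
  rw [hL]
  have hQr0 : 0 ≤ Qr := Finset.sum_nonneg fun p _ => Complex.normSq_nonneg _
  have hNφ0 : 0 ≤ Nφ := Finset.sum_nonneg fun p _ => Complex.normSq_nonneg _
  have hNw0 : 0 ≤ Nw := Finset.sum_nonneg fun p _ => Complex.normSq_nonneg _
  -- real version of S6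
  have e3 : NzR = ((2:ℝ) ^ k)⁻¹ * ∑ c, ∑ t, Complex.normSq (AA E φ w c t) := by
    have := S6 E φ w
    have hcast : ((NzR : ℝ) : ℂ) = ∑ y, (starRingEnd ℂ) (zz E φ w y) * zz E φ w y := by
      rw [hNzR]
      push_cast
      exact Finset.sum_congr rfl fun y _ => by rw [mul_comm, Complex.mul_conj]
    apply Complex.ofReal_injective
    rw [hcast, this]
    push_cast
    ring
  -- Cauchy–Schwarz bound on the A sum
  have e4 : ∑ c, ∑ t, Complex.normSq (AA E φ w c t) ≤ Qr * Nφ := by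
    have hb : ∀ c t, Complex.normSq (AA E φ w c t) ≤
        (∑ u, Complex.normSq (hh E φ w (mg E c u))) * (∑ u, Complex.normSq (φ (mg E t u))) :=
      fun c t => cs_complex (fun u => hh E φ w (mg E c u)) (fun u => φ (mg E t u))
    calc ∑ c, ∑ t, Complex.normSq (AA E φ w c t)
        ≤ ∑ c, ∑ t, (∑ u, Complex.normSq (hh E φ w (mg E c u))) *
            (∑ u, Complex.normSq (φ (mg E t u))) :=
          Finset.sum_le_sum fun c _ => Finset.sum_le_sum fun t _ => hb c t
      _ = (∑ c, ∑ u, Complex.normSq (hh E φ w (mg E c u))) *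
            (∑ t, ∑ u, Complex.normSq (φ (mg E t u))) := by
          rw [Finset.sum_mul_sum]
      _ = Qr * Nφ := by rw [hQr, hNφ, sum_mg E (fun p => Complex.normSq (hh E φ w p)),
            sum_mg E (fun s => Complex.normSq (φ s))]
  -- Cauchy–Schwarz between z and w
  have e6 : Qr ^ 2 ≤ NzR * Nw := by
    have h1 := cs_complex (fun y => (starRingEnd ℂ) (zz E φ w y)) w
    have h2 : ∑ y, (fun y => (starRingEnd ℂ) (zz E φ w y)) y * w y = (Qr : ℂ) := by
      rw [zw_eq E φ w, hQr]
      push_cast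
      rfl
    rw [h2] at h1
    have h3 : Complex.normSq ((Qr : ℂ)) = Qr ^ 2 := by
      rw [Complex.normSq_ofReal]; ring
    rw [h3] at h1
    have h4 : ∑ y, Complex.normSq ((starRingEnd ℂ) (zz E φ w y)) = NzR := by
      rw [hNzR]
      exact Finset.sum_congr rfl fun y _ => Complex.normSq_conj _
    rw [h4] at h1
    exact h1
  -- combine
  rcases hQr0.eq_or_lt with h | h
  · rw [← h]
    positivity
  · have hchain : Qr * Qr ≤ Qr * (((2:ℝ) ^ k)⁻¹ * Nφ * Nw) := by
      calc Qr * Qr = Qr ^ 2 := by ring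
        _ ≤ NzR * Nw := e6
        _ ≤ (((2:ℝ) ^ k)⁻¹ * (Qr * Nφ)) * Nw := by
            apply mul_le_mul_of_nonneg_right _ hNw0
            rw [e3]
            apply mul_le_mul_of_nonneg_left e4 (by positivity)
        _ = Qr * (((2:ℝ) ^ k)⁻¹ * Nφ * Nw) := by ring
    have := (mul_le_mul_iff_right₀ h).mp hchain
    linarith

/-- if `(1_R ⊗ M_E)ψ = ψ`, then the reduced matrix of `ψ` on the
`S`-components is bounded by `2^{−(n−|E|)}‖ψ‖²·1`. -/
theorem stmt7 (n : ℕ) (hn : 1 ≤ n) (R : Type) [Fintype R] (E : Finset (Fin n))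
    (ψ : R × (Fin n → Fin 2 × Fin 2) → ℂ)
    (hfix : ∀ (ρ : R) (x : Fin n → Fin 2 × Fin 2),
      ∑ y, matE n E x y * ψ (ρ, y) = ψ (ρ, x)) :
    ((((2 : ℝ) ^ (n - E.card : ℕ))⁻¹ * ∑ z, Complex.normSq (ψ z)) •
        (1 : Matrix (Fin n → Fin 2) (Fin n → Fin 2) ℂ) - redS ψ).PosSemidef := by
  classical
  set c : ℝ := ((2 : ℝ) ^ (n - E.card : ℕ))⁻¹ * ∑ z, Complex.normSq (ψ z) with hc
  rw [Matrix.posSemidef_iff_dotProduct_mulVec]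
  constructor
  · -- Hermitian part
    have h1 : (redS ψ).IsHermitian := by
      ext s s'
      simp only [Matrix.conjTranspose_apply, redS, Matrix.of_apply, Complex.star_def, map_sum,
        _root_.map_mul, Complex.conj_conj]
      refine Finset.sum_congr rfl fun ρ _ => Finset.sum_congr rfl fun p _ => ?_
      ring
    have h2 : (c • (1 : Matrix (Fin n → Fin 2) (Fin n → Fin 2) ℂ)).IsHermitian := by
      ext s s'
      simp only [Matrix.conjTranspose_apply, Matrix.smul_apply, Matrix.one_apply]
      by_cases h : s' = s
      · subst h
        simp [Complex.real_smul, Complex.conj_ofReal]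
      · have h' : ¬(s = s') := fun hh => h hh.symm
        simp [h, h']
    exact h2.sub h1
  · intro φ
    have hredS : ∀ s s' : Fin n → Fin 2, redS ψ s s' =
        ∑ ρ, ∑ p, ψ (ρ, pr p s) * (starRingEnd ℂ) (ψ (ρ, pr p s')) := fun s s' => rfl
    have eq1 : dotProduct (star φ)
        ((c • (1 : Matrix (Fin n → Fin 2) (Fin n → Fin 2) ℂ)) *ᵥ φ) =
        (c : ℂ) * ∑ s, (Complex.normSq (φ s) : ℂ) := by
      have hv : (c • (1 : Matrix (Fin n → Fin 2) (Fin n → Fin 2) ℂ)) *ᵥ φ =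
          fun s => (c : ℂ) * φ s := by
        ext s
        simp [Matrix.mulVec, dotProduct, Matrix.smul_apply, Matrix.one_apply, ite_mul,
          zero_mul, Complex.real_smul]
      rw [hv]
      simp only [dotProduct, Pi.star_apply]
      rw [Finset.mul_sum]
      refine Finset.sum_congr rfl fun s _ => ?_
      calc (starRingEnd ℂ) (φ s) * ((c:ℂ) * φ s)
          = (c:ℂ) * (φ s * (starRingEnd ℂ) (φ s)) := by ring
        _ = (c:ℂ) * (Complex.normSq (φ s) : ℂ) := by rw [Complex.mul_conj]
    have eq2 : dotProduct (star φ) (redS ψ *ᵥ φ) =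
        ∑ ρ : R, ∑ p : Fin n → Fin 2,
          (Complex.normSq (∑ s, (starRingEnd ℂ) (φ s) * ψ (ρ, pr p s)) : ℂ) := by
      calc dotProduct (star φ) (redS ψ *ᵥ φ)
          = ∑ s, ∑ s', ∑ ρ, ∑ p, ((starRingEnd ℂ) (φ s) * ψ (ρ, pr p s)) *
              (φ s' * (starRingEnd ℂ) (ψ (ρ, pr p s'))) := by
            simp only [dotProduct, Matrix.mulVec, Pi.star_apply, Complex.star_def]
            refine Finset.sum_congr rfl fun s _ => ?_
            rw [Finset.mul_sum]
            refine Finset.sum_congr rfl fun s' _ => ?_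
            rw [hredS s s', Finset.sum_mul, Finset.mul_sum]
            refine Finset.sum_congr rfl fun ρ _ => ?_
            rw [Finset.sum_mul, Finset.mul_sum]
            refine Finset.sum_congr rfl fun p _ => ?_
            ring
        _ = ∑ ρ, ∑ s, ∑ s', ∑ p, ((starRingEnd ℂ) (φ s) * ψ (ρ, pr p s)) *
              (φ s' * (starRingEnd ℂ) (ψ (ρ, pr p s'))) := by
            rw [show (∑ s, ∑ s', ∑ ρ, ∑ p : Fin n → Fin 2,
                ((starRingEnd ℂ) (φ s) * ψ (ρ, pr p s)) *
                (φ s' * (starRingEnd ℂ) (ψ (ρ, pr p s')))) =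
                ∑ s, ∑ ρ, ∑ s', ∑ p : Fin n → Fin 2,
                ((starRingEnd ℂ) (φ s) * ψ (ρ, pr p s)) *
                (φ s' * (starRingEnd ℂ) (ψ (ρ, pr p s'))) from
              Finset.sum_congr rfl fun s _ => Finset.sum_comm]
            exact Finset.sum_comm
        _ = ∑ ρ, ∑ p, ∑ s, ∑ s', ((starRingEnd ℂ) (φ s) * ψ (ρ, pr p s)) *
              (φ s' * (starRingEnd ℂ) (ψ (ρ, pr p s'))) := by
            refine Finset.sum_congr rfl fun ρ _ => ?_
            rw [show (∑ s, ∑ s', ∑ p : Fin n → Fin 2,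
                ((starRingEnd ℂ) (φ s) * ψ (ρ, pr p s)) *
                (φ s' * (starRingEnd ℂ) (ψ (ρ, pr p s')))) =
                ∑ s, ∑ p : Fin n → Fin 2, ∑ s',
                ((starRingEnd ℂ) (φ s) * ψ (ρ, pr p s)) *
                (φ s' * (starRingEnd ℂ) (ψ (ρ, pr p s'))) from
              Finset.sum_congr rfl fun s _ => Finset.sum_comm]
            exact Finset.sum_comm
        _ = ∑ ρ, ∑ p, (∑ s, (starRingEnd ℂ) (φ s) * ψ (ρ, pr p s)) *
              (∑ s', φ s' * (starRingEnd ℂ) (ψ (ρ, pr p s'))) := by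
            refine Finset.sum_congr rfl fun ρ _ => Finset.sum_congr rfl fun p _ => ?_
            rw [Finset.sum_mul_sum]
        _ = ∑ ρ, ∑ p,
            (Complex.normSq (∑ s, (starRingEnd ℂ) (φ s) * ψ (ρ, pr p s)) : ℂ) := by
            refine Finset.sum_congr rfl fun ρ _ => Finset.sum_congr rfl fun p _ => ?_
            have hconj : (∑ s', φ s' * (starRingEnd ℂ) (ψ (ρ, pr p s'))) =
                (starRingEnd ℂ) (∑ s, (starRingEnd ℂ) (φ s) * ψ (ρ, pr p s)) := by
              rw [map_sum]
              refine Finset.sum_congr rfl fun s _ => ?_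
              rw [_root_.map_mul, Complex.conj_conj]
            rw [hconj, Complex.mul_conj]
    rw [Matrix.sub_mulVec, dotProduct_sub, eq1, eq2]
    -- reduce to a real inequality
    set Nφ : ℝ := ∑ s, Complex.normSq (φ s) with hNφ
    set T : ℝ := ∑ ρ : R, ∑ p : Fin n → Fin 2,
      Complex.normSq (∑ s, (starRingEnd ℂ) (φ s) * ψ (ρ, pr p s)) with hT
    have hcast : (c : ℂ) * ∑ s, (Complex.normSq (φ s) : ℂ) -
        (∑ ρ : R, ∑ p : Fin n → Fin 2,
          (Complex.normSq (∑ s, (starRingEnd ℂ) (φ s) * ψ (ρ, pr p s)) : ℂ)) =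
        ((c * Nφ - T : ℝ) : ℂ) := by
      rw [hNφ, hT]
      push_cast
      ring
    rw [hcast]
    rw [Complex.zero_le_real, sub_nonneg]
    have hkey : ∀ ρ : R, (∑ p : Fin n → Fin 2,
        Complex.normSq (∑ s, (starRingEnd ℂ) (φ s) * ψ (ρ, pr p s))) ≤
        ((2:ℝ) ^ (n - E.card))⁻¹ * Nφ * ∑ y, Complex.normSq (ψ (ρ, y)) :=
      fun ρ => key E φ (fun y => ψ (ρ, y)) (hfix ρ)
    calc T ≤ ∑ ρ : R, ((2:ℝ) ^ (n - E.card))⁻¹ * Nφ * ∑ y, Complex.normSq (ψ (ρ, y)) :=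
          Finset.sum_le_sum fun ρ _ => hkey ρ
      _ = ((2:ℝ) ^ (n - E.card))⁻¹ * Nφ * ∑ ρ : R, ∑ y, Complex.normSq (ψ (ρ, y)) := by
          exact (Finset.mul_sum _ _ _).symm
      _ = c * Nφ := by
          rw [hc, Fintype.sum_prod_type]
          ring
end
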